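/- arXiv:1805.09887 — 4 statements merged into one kernel-verified Lean document; each statement's English description precedes it below -/
import Mathlib

section
/- Let I be an instance of SPA-ST. Any two super-stable matchings in I have the same cardinality. -/
open scoped Classical

/-- An instance of the Student-Project Allocation problem with lecturer
preferences over students, with Ties (SPA-ST).  `sPref s p q` means student `s`
ranks project `p` at least as highly as project `q` (`p ⪰_s q`); `lPref k t t'`
means lecturer `k` ranks student `t` at least as highly as student `t'`. -/
structure SPAST (S P L : Type) [Fintype S] [Fintype P] [Fintype L]
    [DecidableEq S] [DecidableEq P] [DecidableEq L] where
  /-- the lecturer offering each project -/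
  lec : P → L
  /-- project capacities -/
  c : P → ℕ
  /-- lecturer capacities -/
  d : L → ℕ
  cpos : ∀ p : P, 0 < c p
  dpos : ∀ k : L, 0 < d k
  /-- the set of projects acceptable to each student -/
  acc : S → Finset P
  sPref : S → P → P → Prop
  lPref : L → S → S → Prop
  sRefl : ∀ s : S, ∀ p ∈ acc s, sPref s p p
  sTrans : ∀ s : S, ∀ p ∈ acc s, ∀ q ∈ acc s, ∀ r ∈ acc s,
    sPref s p q → sPref s q r → sPref s p r
  sTotal : ∀ s : S, ∀ p ∈ acc s, ∀ q ∈ acc s, sPref s p q ∨ sPref s q p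
  lRefl : ∀ k : L, ∀ t : S, (∃ p ∈ acc t, lec p = k) → lPref k t t
  lTrans : ∀ k : L, ∀ t1 t2 t3 : S,
    (∃ p ∈ acc t1, lec p = k) → (∃ p ∈ acc t2, lec p = k) → (∃ p ∈ acc t3, lec p = k) →
    lPref k t1 t2 → lPref k t2 t3 → lPref k t1 t3
  lTotal : ∀ k : L, ∀ t1 t2 : S,
    (∃ p ∈ acc t1, lec p = k) → (∃ p ∈ acc t2, lec p = k) →
    lPref k t1 t2 ∨ lPref k t2 t1
  capLB : ∀ p : P, c p ≤ d (lec p)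
  capUB : ∀ k : L, d k ≤ ∑ p ∈ Finset.univ.filter (fun p => lec p = k), c p

namespace SPAST

variable {S P L : Type} [Fintype S] [Fintype P] [Fintype L]
  [DecidableEq S] [DecidableEq P] [DecidableEq L]

/-- `M` is a matching: pairs are acceptable, each student is matched at most once,
and project and lecturer capacities are respected. -/
def IsMatching (I : SPAST S P L) (M : Finset (S × P)) : Prop :=
  (∀ x ∈ M, x.2 ∈ I.acc x.1) ∧
  (∀ s : S, ∀ p q : P, (s, p) ∈ M → (s, q) ∈ M → p = q) ∧
  (∀ p : P, (M.filter (fun x => x.2 = p)).card ≤ I.c p) ∧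
  (∀ k : L, (M.filter (fun x => I.lec x.2 = k)).card ≤ I.d k)

/-- The set `M(p)` of students assigned to project `p` in `M`. -/
def projAsg (M : Finset (S × P)) (p : P) : Finset S :=
  (M.filter (fun x => x.2 = p)).image Prod.fst

/-- The set `M(l_k)` of students assigned to lecturer `k` in `M`. -/
def lecAsg (I : SPAST S P L) (M : Finset (S × P)) (k : L) : Finset S :=
  (M.filter (fun x => I.lec x.2 = k)).image Prod.fst

/-- `t` is a least-preferred (worst) student of lecturer `k` in the set `T`. -/
def WorstIn (I : SPAST S P L) (k : L) (T : Finset S) (t : S) : Prop :=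
  t ∈ T ∧ ∀ t' ∈ T, I.lPref k t' t

/-- `(s, p)` is a super-blocking pair for `M`. -/
def SuperBlocking (I : SPAST S P L) (M : Finset (S × P)) (s : S) (p : P) : Prop :=
  p ∈ I.acc s ∧ (s, p) ∉ M ∧
  (∀ q : P, (s, q) ∈ M → ¬(I.sPref s q p ∧ ¬I.sPref s p q)) ∧
  (((projAsg M p).card < I.c p ∧ (lecAsg I M (I.lec p)).card < I.d (I.lec p)) ∨
   ((projAsg M p).card < I.c p ∧ (lecAsg I M (I.lec p)).card = I.d (I.lec p) ∧
     (s ∈ lecAsg I M (I.lec p) ∨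
      ∃ t : S, WorstIn I (I.lec p) (lecAsg I M (I.lec p)) t ∧ I.lPref (I.lec p) s t)) ∨
   ((projAsg M p).card = I.c p ∧
     ∃ t : S, WorstIn I (I.lec p) (projAsg M p) t ∧ I.lPref (I.lec p) s t))

/-- `(s, p)` is a weakly-blocking pair for `M`. -/
def WeakBlocking (I : SPAST S P L) (M : Finset (S × P)) (s : S) (p : P) : Prop :=
  p ∈ I.acc s ∧ (s, p) ∉ M ∧
  (∀ q : P, (s, q) ∈ M → I.sPref s p q ∧ ¬I.sPref s q p) ∧
  (((projAsg M p).card < I.c p ∧ (lecAsg I M (I.lec p)).card < I.d (I.lec p)) ∨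
   ((projAsg M p).card < I.c p ∧ (lecAsg I M (I.lec p)).card = I.d (I.lec p) ∧
     (s ∈ lecAsg I M (I.lec p) ∨
      ∃ t : S, WorstIn I (I.lec p) (lecAsg I M (I.lec p)) t ∧
        (I.lPref (I.lec p) s t ∧ ¬I.lPref (I.lec p) t s))) ∨
   ((projAsg M p).card = I.c p ∧
     ∃ t : S, WorstIn I (I.lec p) (projAsg M p) t ∧
       (I.lPref (I.lec p) s t ∧ ¬I.lPref (I.lec p) t s)))

/-- `M` is a super-stable matching in `I`. -/
def SuperStable (I : SPAST S P L) (M : Finset (S × P)) : Prop :=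
  I.IsMatching M ∧ ∀ (s : S) (p : P), ¬SuperBlocking I M s p

/-- `M` is a weakly stable matching in `I`. -/
def WeaklyStable (I : SPAST S P L) (M : Finset (S × P)) : Prop :=
  I.IsMatching M ∧ ∀ (s : S) (p : P), ¬WeakBlocking I M s p

/-- `I` is an SPA-S instance: all preference lists are strictly ordered
(the preorders are antisymmetric). -/
def StrictPrefs (I : SPAST S P L) : Prop :=
  (∀ s : S, ∀ p ∈ I.acc s, ∀ q ∈ I.acc s, I.sPref s p q → I.sPref s q p → p = q) ∧
  (∀ k : L, ∀ t t' : S, (∃ p ∈ I.acc t, I.lec p = k) → (∃ p ∈ I.acc t', I.lec p = k) →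
    I.lPref k t t' → I.lPref k t' t → t = t')

/-- `I'` is an SPA-S instance obtained from `I` by breaking the ties. -/
def TieBreaking (I I' : SPAST S P L) : Prop :=
  I'.lec = I.lec ∧ I'.c = I.c ∧ I'.d = I.d ∧ I'.acc = I.acc ∧
  StrictPrefs I' ∧
  (∀ (s : S) (p q : P), I.sPref s p q → ¬I.sPref s q p →
    I'.sPref s p q ∧ ¬I'.sPref s q p) ∧
  (∀ (k : L) (t t' : S), I.lPref k t t' → ¬I.lPref k t' t →
    I'.lPref k t t' ∧ ¬I'.lPref k t' t)

end SPAST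

set_option linter.unusedSectionVars false
set_option linter.unusedVariables false

namespace SSH

open SPAST Finset

theorem ltStep {n a a' b b' : ℕ} (h : a < a') (hb : b < n) :
    a * n + b < a' * n + b' := by
  have h2 : a * n + n = (a + 1) * n := by ring
  have h3 : (a + 1) * n ≤ a' * n := Nat.mul_le_mul_right n h
  omega

theorem stepInj {n a a' b b' : ℕ} (hb : b < n) (hb' : b' < n)
    (h : a * n + b = a' * n + b') : a = a' ∧ b = b' := by
  have ha : a = a' := by
    rcases lt_trichotomy a a' with h1 | h1 | h1
    · exact absurd h (Nat.ne_of_lt (ltStep h1 hb))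
    · exact h1
    · exact absurd h.symm (Nat.ne_of_lt (ltStep h1 hb'))
  subst ha
  omega

variable {S P L : Type} [Fintype S] [Fintype P] [Fintype L]
  [DecidableEq S] [DecidableEq P] [DecidableEq L]

/-- `t` is a relevant student for lecturer `k`. -/
def relS (I : SPAST S P L) (k : L) (t : S) : Prop := ∃ p ∈ I.acc t, I.lec p = k

/-- `x` is strictly better than `t` for lecturer `k`. -/
def sB (I : SPAST S P L) (k : L) (x t : S) : Prop :=
  I.lPref k x t ∧ ¬ I.lPref k t x

/-- `p` is strictly better than `q` for student `s`. -/
def pB (I : SPAST S P L) (s : S) (p q : P) : Prop :=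
  I.sPref s p q ∧ ¬ I.sPref s q p

/-- rank of student `t` in lecturer `k`'s list: number of strictly better relevant students. -/
noncomputable def rk (I : SPAST S P L) (k : L) (t : S) : ℕ :=
  (univ.filter (fun x : S => relS I k x ∧ sB I k x t)).card

/-- rank of project `p` in student `s`'s list. -/
noncomputable def rp (I : SPAST S P L) (s : S) (p : P) : ℕ :=
  ((I.acc s).filter (fun q => pB I s q p)).card

noncomputable def N0 (S P : Type) [Fintype S] [Fintype P] : ℕ :=
  Fintype.card S + Fintype.card P + 1

noncomputable def ixS (S : Type) [Fintype S] : S → ℕ := fun s => (Fintype.equivFin S s : ℕ)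

noncomputable def ixP (P : Type) [Fintype P] : P → ℕ := fun p => (Fintype.equivFin P p : ℕ)

/-- tie-broken linear key for lecturer-side comparisons (smaller = more preferred). -/
noncomputable def keyL (I : SPAST S P L) (e : S × P) : ℕ :=
  (rk I (I.lec e.2) e.1 * N0 S P + ixS S e.1) * N0 S P + ixP P e.2

/-- tie-broken linear key for student-side comparisons (smaller = more preferred). -/
noncomputable def keyS (I : SPAST S P L) (e : S × P) : ℕ :=
  rp I e.1 e.2 * N0 S P + ixP P e.2

theorem rk_lt_N0 (I : SPAST S P L) (k : L) (t : S) : rk I k t < N0 S P := by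
  have h : rk I k t ≤ Fintype.card S := by
    calc rk I k t ≤ (univ : Finset S).card := Finset.card_filter_le _ _
    _ = Fintype.card S := Finset.card_univ
  have : 0 ≤ Fintype.card P := Nat.zero_le _
  unfold N0; omega

theorem ixS_lt_N0 (s : S) : ixS S s < N0 S P := by
  have := (Fintype.equivFin S s).isLt
  unfold N0 ixS; omega

theorem ixP_lt_N0 (p : P) : ixP P p < N0 S P := by
  have := (Fintype.equivFin P p).isLt
  unfold N0 ixP; omega

theorem rp_lt_N0 (I : SPAST S P L) (s : S) (p : P) : rp I s p < N0 S P := by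
  have h : rp I s p ≤ Fintype.card P := by
    calc rp I s p ≤ (I.acc s).card := Finset.card_filter_le _ _
    _ ≤ Fintype.card P := Finset.card_le_univ _
  unfold N0; omega

theorem ixS_inj {s t : S} (h : ixS S s = ixS S t) : s = t := by
  unfold ixS at h
  exact (Fintype.equivFin S).injective (Fin.val_injective h)

theorem ixP_inj {p q : P} (h : ixP P p = ixP P q) : p = q := by
  unfold ixP at h
  exact (Fintype.equivFin P).injective (Fin.val_injective h)

theorem keyL_inj {I : SPAST S P L} {e f : S × P} (h : keyL I e = keyL I f) : e = f := by
  unfold keyL at h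
  obtain ⟨h1, h2⟩ := stepInj (ixP_lt_N0 e.2) (ixP_lt_N0 f.2) h
  obtain ⟨_, h4⟩ := stepInj (ixS_lt_N0 e.1) (ixS_lt_N0 f.1) h1
  exact Prod.ext (ixS_inj h4) (ixP_inj h2)

theorem keyS_inj_same {I : SPAST S P L} {e f : S × P} (h1 : e.1 = f.1)
    (h : keyS I e = keyS I f) : e = f := by
  unfold keyS at h
  obtain ⟨_, h2⟩ := stepInj (ixP_lt_N0 e.2) (ixP_lt_N0 f.2) h
  exact Prod.ext h1 (ixP_inj h2)

theorem keyL_lt_of_rk {I : SPAST S P L} {e f : S × P} (hlec : I.lec e.2 = I.lec f.2)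
    (h : rk I (I.lec e.2) e.1 < rk I (I.lec f.2) f.1) : keyL I e < keyL I f := by
  unfold keyL
  exact ltStep (ltStep h (ixS_lt_N0 e.1)) (ixP_lt_N0 e.2)

theorem keyS_lt_of_rp {I : SPAST S P L} {e f : S × P}
    (h : rp I e.1 e.2 < rp I f.1 f.2) : keyS I e < keyS I f := by
  unfold keyS
  exact ltStep h (ixP_lt_N0 e.2)

/-- strict transitivity for the lecturer preorder. -/
theorem sB_trans {I : SPAST S P L} {k : L} {x y z : S}
    (hx : relS I k x) (hy : relS I k y) (hz : relS I k z)
    (h1 : sB I k x y) (h2 : sB I k y z) : sB I k x z := by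
  refine ⟨I.lTrans k x y z hx hy hz h1.1 h2.1, fun hc => ?_⟩
  exact h2.2 (I.lTrans k z x y hz hx hy hc h1.1)

theorem pB_trans {I : SPAST S P L} {s : S} {x y z : P}
    (hx : x ∈ I.acc s) (hy : y ∈ I.acc s) (hz : z ∈ I.acc s)
    (h1 : pB I s x y) (h2 : pB I s y z) : pB I s x z := by
  refine ⟨I.sTrans s x hx y hy z hz h1.1 h2.1, fun hc => ?_⟩
  exact h2.2 (I.sTrans s z hz x hx y hy hc h1.1)

theorem rk_lt_of_sB {I : SPAST S P L} {k : L} {x t : S}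
    (hx : relS I k x) (ht : relS I k t) (h : sB I k x t) : rk I k x < rk I k t := by
  apply Finset.card_lt_card
  constructor
  · intro y hy
    simp only [Finset.mem_filter, Finset.mem_univ, true_and] at hy ⊢
    exact ⟨hy.1, sB_trans hy.1 hx ht hy.2 h⟩
  · intro hsub
    have hxmem : x ∈ univ.filter (fun y : S => relS I k y ∧ sB I k y t) := by
      simp only [Finset.mem_filter, Finset.mem_univ, true_and]
      exact ⟨hx, h⟩
    have := hsub hxmem
    simp only [Finset.mem_filter, Finset.mem_univ, true_and] at this
    exact this.2.2 this.2.1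

theorem rp_lt_of_pB {I : SPAST S P L} {s : S} {x t : P}
    (hx : x ∈ I.acc s) (ht : t ∈ I.acc s) (h : pB I s x t) : rp I s x < rp I s t := by
  apply Finset.card_lt_card
  constructor
  · intro y hy
    simp only [Finset.mem_filter] at hy ⊢
    exact ⟨hy.1, pB_trans hy.1 hx ht hy.2 h⟩
  · intro hsub
    have hxmem : x ∈ (I.acc s).filter (fun q => pB I s q t) := by
      simp only [Finset.mem_filter]; exact ⟨hx, h⟩
    have := hsub hxmem
    simp only [Finset.mem_filter] at this
    exact this.2.2 this.2.1

/-- lecturer's total order gives a strict comparison when weak preference fails. -/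
theorem sB_of_not_lPref {I : SPAST S P L} {k : L} {x t : S}
    (hx : relS I k x) (ht : relS I k t) (h : ¬ I.lPref k t x) : sB I k x t := by
  rcases I.lTotal k x t hx ht with h1 | h1
  · exact ⟨h1, h⟩
  · exact absurd h1 h


/-! ### The choice functions and rejection operators -/

/-- the set of acceptable pairs -/
noncomputable def Efin (I : SPAST S P L) : Finset (S × P) :=
  univ.filter (fun e => e.2 ∈ I.acc e.1)

theorem mem_Efin {I : SPAST S P L} {e : S × P} : e ∈ Efin I ↔ e.2 ∈ I.acc e.1 := by
  unfold Efin; simp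

/-- number of contracts in `Y` at project `q` that lecturer `I.lec q` strictly
prefers to `e` (in the tie-broken order). -/
noncomputable def cnt (I : SPAST S P L) (Y : Finset (S × P)) (q : P) (e : S × P) : ℕ :=
  (Y.filter (fun f => f.2 = q ∧ keyL I f < keyL I e)).card

/-- `e` is rejected by its lecturer from the offer set `Y` (greedy laminar choice). -/
def rej (I : SPAST S P L) (Y : Finset (S × P)) (e : S × P) : Prop :=
  I.c e.2 ≤ cnt I Y e.2 e ∨
  I.d (I.lec e.2) ≤
    ∑ q ∈ univ.filter (fun q => I.lec q = I.lec e.2), min (I.c q) (cnt I Y q e)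

noncomputable def RL (I : SPAST S P L) (Y : Finset (S × P)) : Finset (S × P) :=
  Y.filter (fun e => rej I Y e)

noncomputable def RS (I : SPAST S P L) (X : Finset (S × P)) : Finset (S × P) :=
  X.filter (fun e => ∃ f ∈ X, f.1 = e.1 ∧ keyS I f < keyS I e)

theorem cnt_mono (I : SPAST S P L) {Y Y' : Finset (S × P)} (h : Y ⊆ Y') (q : P) (e : S × P) :
    cnt I Y q e ≤ cnt I Y' q e :=
  Finset.card_le_card (Finset.filter_subset_filter _ h)

theorem RL_mono (I : SPAST S P L) {Y Y' : Finset (S × P)} (h : Y ⊆ Y') :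
    RL I Y ⊆ RL I Y' := by
  intro e he
  simp only [RL, Finset.mem_filter] at he ⊢
  refine ⟨h he.1, ?_⟩
  rcases he.2 with h1 | h1
  · exact Or.inl (le_trans h1 (cnt_mono I h _ _))
  · refine Or.inr (le_trans h1 ?_)
    exact Finset.sum_le_sum fun q _ => le_min (min_le_left _ _)
      (le_trans (min_le_right _ _) (cnt_mono I h q e))

theorem RS_mono (I : SPAST S P L) {X X' : Finset (S × P)} (h : X ⊆ X') :
    RS I X ⊆ RS I X' := by
  intro e he
  simp only [RS, Finset.mem_filter] at he ⊢
  obtain ⟨he1, f, hf1, hf2⟩ := he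
  exact ⟨h he1, f, h hf1, hf2⟩

/-! ### worst students -/

theorem exists_worst (I : SPAST S P L) (k : L) (T : Finset S) (hne : T.Nonempty)
    (hrel : ∀ t ∈ T, relS I k t) : ∃ w, WorstIn I k T w := by
  obtain ⟨w, hw, hmax⟩ := Finset.exists_max_image T (rk I k) hne
  refine ⟨w, hw, fun x hx => ?_⟩
  by_contra hc
  have hsb : sB I k w x := sB_of_not_lPref (hrel w hw) (hrel x hx) hc
  have := rk_lt_of_sB (hrel w hw) (hrel x hx) hsb
  have := hmax x hx
  omega

/-- all members of `T` are strictly better than `t` if `t` is not weakly above a worst. -/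
theorem all_sB {I : SPAST S P L} {k : L} {T : Finset S} {w t : S}
    (hw : WorstIn I k T w) (hrel : ∀ x ∈ T, relS I k x) (ht : relS I k t)
    (hnt : ¬ I.lPref k t w) : ∀ x ∈ T, sB I k x t := by
  intro x hx
  have hxw : I.lPref k x w := hw.2 x hx
  have hntx : ¬ I.lPref k t x := fun hc =>
    hnt (I.lTrans k t x w ht (hrel x hx) (hrel w hw.1) hc hxw)
  exact sB_of_not_lPref (hrel x hx) ht hntx

/-! ### matching basics -/

theorem projAsg_card {I : SPAST S P L} {M : Finset (S × P)} (hm : I.IsMatching M) (p : P) :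
    (projAsg M p).card = (M.filter (fun x => x.2 = p)).card := by
  apply Finset.card_image_of_injOn
  intro a ha b hb hab
  simp only [Finset.coe_filter, Set.mem_setOf_eq] at ha hb
  exact Prod.ext hab (ha.2.trans hb.2.symm)

theorem lecAsg_card {I : SPAST S P L} {M : Finset (S × P)} (hm : I.IsMatching M) (k : L) :
    (lecAsg I M k).card = (M.filter (fun x => I.lec x.2 = k)).card := by
  apply Finset.card_image_of_injOn
  intro a ha b hb hab
  simp only [Finset.coe_filter, Set.mem_setOf_eq] at ha hb
  have := hm.2.1 a.1 a.2 b.2 (by simpa using ha.1) (by rw [hab]; simpa using hb.1)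
  exact Prod.ext hab this

theorem mem_projAsg {M : Finset (S × P)} {p : P} {x : S} :
    x ∈ projAsg M p ↔ (x, p) ∈ M := by
  unfold projAsg
  simp only [Finset.mem_image, Finset.mem_filter]
  constructor
  · rintro ⟨a, ⟨ha, ha2⟩, rfl⟩
    rwa [show (a.1, p) = a from (Prod.ext rfl ha2.symm)]
  · intro h; exact ⟨(x, p), ⟨h, rfl⟩, rfl⟩

theorem mem_lecAsg {I : SPAST S P L} {M : Finset (S × P)} {k : L} {x : S} :
    x ∈ lecAsg I M k ↔ ∃ q, (x, q) ∈ M ∧ I.lec q = k := by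
  unfold lecAsg
  simp only [Finset.mem_image, Finset.mem_filter]
  constructor
  · rintro ⟨a, ⟨ha, ha2⟩, rfl⟩
    exact ⟨a.2, ha, ha2⟩
  · rintro ⟨q, hq, hq2⟩; exact ⟨(x, q), ⟨hq, hq2⟩, rfl⟩

theorem relS_of_mem {I : SPAST S P L} {M : Finset (S × P)} (hm : I.IsMatching M)
    {x : S} {q : P} (h : (x, q) ∈ M) : relS I (I.lec q) x :=
  ⟨q, hm.1 _ h, rfl⟩

/-! ### the fixed point associated with a super-stable matching -/

noncomputable def XM (I : SPAST S P L) (M : Finset (S × P)) : Finset (S × P) :=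
  (Efin I).filter (fun e => e ∈ M ∨ ∃ q, (e.1, q) ∈ M ∧ I.sPref e.1 q e.2 ∧ ¬ I.sPref e.1 e.2 q)

noncomputable def YM (I : SPAST S P L) (M : Finset (S × P)) : Finset (S × P) :=
  (Efin I).filter (fun e => e ∈ M ∨ ∀ q, (e.1, q) ∈ M → ¬(I.sPref e.1 q e.2 ∧ ¬ I.sPref e.1 e.2 q))

theorem M_sub_E {I : SPAST S P L} {M : Finset (S × P)} (hm : I.IsMatching M) : M ⊆ Efin I :=
  fun e he => mem_Efin.2 (hm.1 e he)

theorem M_sub_XM {I : SPAST S P L} {M : Finset (S × P)} (hm : I.IsMatching M) : M ⊆ XM I M :=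
  fun e he => Finset.mem_filter.2 ⟨M_sub_E hm he, Or.inl he⟩

theorem M_sub_YM {I : SPAST S P L} {M : Finset (S × P)} (hm : I.IsMatching M) : M ⊆ YM I M :=
  fun e he => Finset.mem_filter.2 ⟨M_sub_E hm he, Or.inl he⟩

/-- the key dichotomy for a pair that is acceptable, unmatched, and weakly wanted by
its student: either its project is full with strictly better students, or its
lecturer is full with strictly better students. -/
theorem junk_cases {I : SPAST S P L} {M : Finset (S × P)} (hM : SuperStable I M)
    {f : S × P} (hfE : f.2 ∈ I.acc f.1) (hfM : f ∉ M)
    (ha : ∀ q : P, (f.1, q) ∈ M → ¬(I.sPref f.1 q f.2 ∧ ¬ I.sPref f.1 f.2 q)) :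
    ((M.filter (fun x => x.2 = f.2)).card = I.c f.2 ∧
      ∀ x ∈ projAsg M f.2, sB I (I.lec f.2) x f.1) ∨
    ((M.filter (fun x => I.lec x.2 = I.lec f.2)).card = I.d (I.lec f.2) ∧
      f.1 ∉ lecAsg I M (I.lec f.2) ∧
      ∀ x ∈ lecAsg I M (I.lec f.2), sB I (I.lec f.2) x f.1) := by
  obtain ⟨hm, hnb⟩ := hM
  have hfM' : (f.1, f.2) ∉ M := by rwa [Prod.mk.eta]
  have hb : ¬ (((projAsg M f.2).card < I.c f.2 ∧
      (lecAsg I M (I.lec f.2)).card < I.d (I.lec f.2)) ∨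
    ((projAsg M f.2).card < I.c f.2 ∧ (lecAsg I M (I.lec f.2)).card = I.d (I.lec f.2) ∧
      (f.1 ∈ lecAsg I M (I.lec f.2) ∨
      ∃ t : S, WorstIn I (I.lec f.2) (lecAsg I M (I.lec f.2)) t ∧ I.lPref (I.lec f.2) f.1 t)) ∨
    ((projAsg M f.2).card = I.c f.2 ∧
      ∃ t : S, WorstIn I (I.lec f.2) (projAsg M f.2) t ∧ I.lPref (I.lec f.2) f.1 t)) :=
    fun hbb => hnb f.1 f.2 ⟨hfE, hfM', ha, hbb⟩
  push_neg at hb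
  obtain ⟨hb1, hb2, hb3⟩ := hb
  have hrelf : relS I (I.lec f.2) f.1 := ⟨f.2, hfE, rfl⟩
  have hpc : (projAsg M f.2).card ≤ I.c f.2 := by
    rw [projAsg_card hm]; exact hm.2.2.1 _
  have hrelproj : ∀ x ∈ projAsg M f.2, relS I (I.lec f.2) x := by
    intro x hx
    exact relS_of_mem hm (mem_projAsg.1 hx)
  have hrellec : ∀ x ∈ lecAsg I M (I.lec f.2), relS I (I.lec f.2) x := by
    intro x hx
    obtain ⟨q, hq, hq2⟩ := mem_lecAsg.1 hx
    exact hq2 ▸ relS_of_mem hm hq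
  by_cases hfull : (projAsg M f.2).card = I.c f.2
  · left
    refine ⟨by rw [← projAsg_card hm]; exact hfull, ?_⟩
    have hne : (projAsg M f.2).Nonempty := by
      rw [← Finset.card_pos, hfull]; exact I.cpos f.2
    obtain ⟨w, hw⟩ := exists_worst I (I.lec f.2) _ hne hrelproj
    have hnw : ¬ I.lPref (I.lec f.2) f.1 w := fun hc => (hb3 hfull) w hw hc
    exact all_sB hw hrelproj hrelf hnw
  · right
    have hlt : (projAsg M f.2).card < I.c f.2 := lt_of_le_of_ne hpc hfull
    have hlec_le : (lecAsg I M (I.lec f.2)).card ≤ I.d (I.lec f.2) := by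
      rw [lecAsg_card hm]; exact hm.2.2.2 _
    have hlecfull : (lecAsg I M (I.lec f.2)).card = I.d (I.lec f.2) := by
      have := hb1 hlt
      omega
    have hb2' := hb2 hlt hlecfull
    obtain ⟨hnotmem, hnoworst⟩ := hb2'
    have hne : (lecAsg I M (I.lec f.2)).Nonempty := by
      rw [← Finset.card_pos, hlecfull]; exact I.dpos _
    obtain ⟨w, hw⟩ := exists_worst I (I.lec f.2) _ hne hrellec
    refine ⟨by rw [← lecAsg_card hm]; exact hlecfull, hnotmem, ?_⟩
    exact all_sB hw hrellec hrelf (hnoworst w hw)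


/-! ### fiberwise counting -/

theorem fib_card (I : SPAST S P L) (M : Finset (S × P)) (k : L) :
    (M.filter (fun x => I.lec x.2 = k)).card =
      ∑ q ∈ univ.filter (fun q => I.lec q = k), (M.filter (fun x => x.2 = q)).card := by
  rw [Finset.card_eq_sum_card_fiberwise (f := fun x : S × P => x.2)
    (t := univ.filter (fun q => I.lec q = k))
    (fun x hx => by
      simp only [Finset.mem_coe, Finset.mem_filter] at hx ⊢
      exact ⟨Finset.mem_univ _, hx.2⟩)]
  apply Finset.sum_congr rfl
  intro q hq
  have hqk := (Finset.mem_filter.1 hq).2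
  congr 1
  ext x
  simp only [Finset.mem_filter]
  constructor
  · rintro ⟨⟨h1, _⟩, h3⟩; exact ⟨h1, h3⟩
  · rintro ⟨h1, h3⟩; exact ⟨⟨h1, by rw [h3]; exact hqk⟩, h3⟩

/-! ### every "junk" pair is rejected from `YM`, every matched pair is kept -/

theorem junk_rej {I : SPAST S P L} {M : Finset (S × P)} (hM : SuperStable I M)
    {f : S × P} (hf : f ∈ YM I M) (hfM : f ∉ M) : rej I (YM I M) f := by
  have hm := hM.1
  obtain ⟨hfE', hqall⟩ := Finset.mem_filter.1 hf
  have hfE : f.2 ∈ I.acc f.1 := mem_Efin.1 hfE'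
  have ha := hqall.resolve_left hfM
  have hrelf : relS I (I.lec f.2) f.1 := ⟨f.2, hfE, rfl⟩
  rcases junk_cases hM hfE hfM ha with ⟨hfull, hall⟩ | ⟨hfull, hnm, hall⟩
  · left
    have hsub : M.filter (fun x => x.2 = f.2) ⊆
        (YM I M).filter (fun g => g.2 = f.2 ∧ keyL I g < keyL I f) := by
      intro g hg
      obtain ⟨hgM, hg2⟩ := Finset.mem_filter.1 hg
      refine Finset.mem_filter.2 ⟨M_sub_YM hm hgM, hg2, ?_⟩
      have hgM' : (g.1, g.2) ∈ M := by rw [Prod.mk.eta]; exact hgM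
      have hx : g.1 ∈ projAsg M f.2 := mem_projAsg.2 (by rw [← hg2]; exact hgM')
      have hsb := hall g.1 hx
      have hrelg : relS I (I.lec f.2) g.1 := by
        rw [← hg2]; exact relS_of_mem hm hgM'
      have hrk := rk_lt_of_sB hrelg hrelf hsb
      refine keyL_lt_of_rk (by rw [hg2]) ?_
      rw [hg2]; exact hrk
    calc I.c f.2 = (M.filter (fun x => x.2 = f.2)).card := hfull.symm
    _ ≤ cnt I (YM I M) f.2 f := Finset.card_le_card hsub
  · right
    have hsub : ∀ q, I.lec q = I.lec f.2 → M.filter (fun x => x.2 = q) ⊆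
        (YM I M).filter (fun g => g.2 = q ∧ keyL I g < keyL I f) := by
      intro q hqk g hg
      obtain ⟨hgM, hg2⟩ := Finset.mem_filter.1 hg
      refine Finset.mem_filter.2 ⟨M_sub_YM hm hgM, hg2, ?_⟩
      have hgM' : (g.1, g.2) ∈ M := by rw [Prod.mk.eta]; exact hgM
      have hx : g.1 ∈ lecAsg I M (I.lec f.2) :=
        mem_lecAsg.2 ⟨g.2, hgM', by rw [hg2]; exact hqk⟩
      have hsb := hall g.1 hx
      have hrelg : relS I (I.lec f.2) g.1 := by
        rw [← hqk, ← hg2]; exact relS_of_mem hm hgM'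
      have hrk := rk_lt_of_sB hrelg hrelf hsb
      refine keyL_lt_of_rk (by rw [hg2, hqk]) ?_
      rw [hg2, hqk]; exact hrk
    calc I.d (I.lec f.2) = (M.filter (fun x => I.lec x.2 = I.lec f.2)).card := hfull.symm
    _ = ∑ q ∈ univ.filter (fun q => I.lec q = I.lec f.2),
        (M.filter (fun x => x.2 = q)).card := fib_card I M _
    _ ≤ ∑ q ∈ univ.filter (fun q => I.lec q = I.lec f.2),
        min (I.c q) (cnt I (YM I M) q f) := by
      apply Finset.sum_le_sum
      intro q hq
      exact le_min (hm.2.2.1 q)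
        (Finset.card_le_card (hsub q (Finset.mem_filter.1 hq).2))

theorem mem_not_rej {I : SPAST S P L} {M : Finset (S × P)} (hM : SuperStable I M)
    {m : S × P} (hmM : m ∈ M) : ¬ rej I (YM I M) m := by
  have hm := hM.1
  have hmM' : (m.1, m.2) ∈ M := by rw [Prod.mk.eta]; exact hmM
  have hrelm : relS I (I.lec m.2) m.1 := relS_of_mem hm hmM'
  have hJ : ∀ g ∈ YM I M, I.lec g.2 = I.lec m.2 → keyL I g < keyL I m → g ∉ M →
      (g.2 ≠ m.2 ∧ (M.filter (fun x => x.2 = g.2)).card = I.c g.2) := by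
    intro g hg hlec hkey hgM
    obtain ⟨hgE', hq⟩ := Finset.mem_filter.1 hg
    have hgE := mem_Efin.1 hgE'
    have ha := hq.resolve_left hgM
    have hrelg : relS I (I.lec g.2) g.1 := ⟨g.2, hgE, rfl⟩
    rcases junk_cases hM hgE hgM ha with ⟨hfull, hall⟩ | ⟨hfull, hnm, hall⟩
    · refine ⟨?_, hfull⟩
      intro hqe
      have hx : m.1 ∈ projAsg M g.2 := mem_projAsg.2 (by rw [hqe]; exact hmM')
      have hsb := hall m.1 hx
      have hrelm' : relS I (I.lec g.2) m.1 := by rw [hlec]; exact hrelm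
      have hrk := rk_lt_of_sB hrelm' hrelg hsb
      have : keyL I m < keyL I g := by
        refine keyL_lt_of_rk hlec.symm ?_
        rw [hlec]; rw [hlec] at hrk; exact hrk
      omega
    · exfalso
      have hx : m.1 ∈ lecAsg I M (I.lec g.2) :=
        mem_lecAsg.2 ⟨m.2, hmM', hlec.symm⟩
      have hsb := hall m.1 hx
      have hrelm' : relS I (I.lec g.2) m.1 := by rw [hlec]; exact hrelm
      have hrk := rk_lt_of_sB hrelm' hrelg hsb
      have : keyL I m < keyL I g := by
        refine keyL_lt_of_rk hlec.symm ?_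
        rw [hlec]; rw [hlec] at hrk; exact hrk
      omega
  have hcnt1 : cnt I (YM I M) m.2 m < (M.filter (fun x => x.2 = m.2)).card := by
    have hsub : (YM I M).filter (fun g => g.2 = m.2 ∧ keyL I g < keyL I m) ⊆
        (M.filter (fun x => x.2 = m.2)).erase m := by
      intro g hg
      obtain ⟨hgY, hg2, hkey⟩ := Finset.mem_filter.1 hg
      have hgM : g ∈ M := by
        by_contra hgM
        exact (hJ g hgY (by rw [hg2]) hkey hgM).1 hg2
      refine Finset.mem_erase.2 ⟨?_, Finset.mem_filter.2 ⟨hgM, hg2⟩⟩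
      intro hge
      rw [hge] at hkey
      omega
    have hmem0 : m ∈ M.filter (fun x => x.2 = m.2) := Finset.mem_filter.2 ⟨hmM, rfl⟩
    have h1 : cnt I (YM I M) m.2 m ≤ ((M.filter (fun x => x.2 = m.2)).erase m).card :=
      Finset.card_le_card hsub
    have h2 := Finset.card_erase_of_mem hmem0
    have h3 : 0 < (M.filter (fun x => x.2 = m.2)).card :=
      Finset.card_pos.2 ⟨m, hmem0⟩
    omega
  intro hrej
  rcases hrej with h1 | h1
  · have := hm.2.2.1 m.2
    omega
  · have hperq : ∀ q ∈ univ.filter (fun q => I.lec q = I.lec m.2),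
        min (I.c q) (cnt I (YM I M) q m) ≤ (M.filter (fun x => x.2 = q)).card := by
      intro q hq
      have hqk := (Finset.mem_filter.1 hq).2
      by_cases hfq : (M.filter (fun x => x.2 = q)).card = I.c q
      · rw [hfq]; exact min_le_left _ _
      · have hsub : (YM I M).filter (fun g => g.2 = q ∧ keyL I g < keyL I m) ⊆
            M.filter (fun x => x.2 = q) := by
          intro g hg
          obtain ⟨hgY, hg2, hkey⟩ := Finset.mem_filter.1 hg
          have hgM : g ∈ M := by
            by_contra hgM
            have := (hJ g hgY (by rw [hg2]; exact hqk) hkey hgM).2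
            rw [hg2] at this
            exact hfq this
          exact Finset.mem_filter.2 ⟨hgM, hg2⟩
        exact le_trans (min_le_right _ _) (Finset.card_le_card hsub)
    have hmem : m.2 ∈ univ.filter (fun q => I.lec q = I.lec m.2) :=
      Finset.mem_filter.2 ⟨Finset.mem_univ _, rfl⟩
    have hstrict : min (I.c m.2) (cnt I (YM I M) m.2 m) <
        (M.filter (fun x => x.2 = m.2)).card :=
      lt_of_le_of_lt (min_le_right _ _) hcnt1
    have hsum : ∑ q ∈ univ.filter (fun q => I.lec q = I.lec m.2),
        min (I.c q) (cnt I (YM I M) q m) <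
        ∑ q ∈ univ.filter (fun q => I.lec q = I.lec m.2),
          (M.filter (fun x => x.2 = q)).card :=
      Finset.sum_lt_sum hperq ⟨m.2, hmem, hstrict⟩
    have hfib := fib_card I M (I.lec m.2)
    have hd := hm.2.2.2 (I.lec m.2)
    omega

theorem CL_YM {I : SPAST S P L} {M : Finset (S × P)} (hM : SuperStable I M) :
    (YM I M) \ RL I (YM I M) = M := by
  ext e
  simp only [Finset.mem_sdiff, RL, Finset.mem_filter]
  constructor
  · rintro ⟨heY, hnot⟩
    by_contra heM
    exact hnot ⟨heY, junk_rej hM heY heM⟩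
  · intro heM
    exact ⟨M_sub_YM hM.1 heM, fun hc => mem_not_rej hM heM hc.2⟩

theorem fpX {I : SPAST S P L} {M : Finset (S × P)} (hM : SuperStable I M) :
    Efin I \ RL I (YM I M) = XM I M := by
  ext e
  simp only [Finset.mem_sdiff, RL, Finset.mem_filter]
  constructor
  · rintro ⟨heE, hn⟩
    refine Finset.mem_filter.2 ⟨heE, ?_⟩
    by_cases heM : e ∈ M
    · exact Or.inl heM
    · by_cases heY : e ∈ YM I M
      · exact absurd ⟨heY, junk_rej hM heY heM⟩ hn
      · right
        have hne : ¬ ∀ q : P, (e.1, q) ∈ M → ¬(I.sPref e.1 q e.2 ∧ ¬ I.sPref e.1 e.2 q) :=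
          fun h => heY (Finset.mem_filter.2 ⟨heE, Or.inr h⟩)
        push_neg at hne
        obtain ⟨q, hq1, hq2⟩ := hne
        exact ⟨q, hq1, hq2⟩
  · intro he
    obtain ⟨heE, hcase⟩ := Finset.mem_filter.1 he
    refine ⟨heE, ?_⟩
    rintro ⟨heY, hrej⟩
    rcases hcase with heM | ⟨q, hqM, hq⟩
    · exact mem_not_rej hM heM hrej
    · rcases (Finset.mem_filter.1 heY).2 with heM | hall
      · have : q = e.2 := hM.1.2.1 e.1 q e.2 hqM (by rw [Prod.mk.eta]; exact heM)
        rw [this] at hq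
        exact hq.2 hq.1
      · exact (hall q hqM) hq

theorem XM_min {I : SPAST S P L} {M : Finset (S × P)} (hM : SuperStable I M)
    {m : S × P} (hmM : m ∈ M) {f : S × P} (hf : f ∈ XM I M) (hf1 : f.1 = m.1)
    (hfne : f ≠ m) : keyS I m < keyS I f := by
  rcases (Finset.mem_filter.1 hf).2 with hfM | ⟨q, hq1, hq2⟩
  · exfalso
    apply hfne
    have := hM.1.2.1 f.1 f.2 m.2 (by rw [Prod.mk.eta]; exact hfM)
      (by rw [hf1, Prod.mk.eta]; exact hmM)
    exact Prod.ext hf1 this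
  · have hq : q = m.2 := hM.1.2.1 f.1 q m.2 hq1 (by rw [hf1, Prod.mk.eta]; exact hmM)
    subst hq
    have hrp : rp I f.1 m.2 < rp I f.1 f.2 :=
      rp_lt_of_pB (hM.1.1 _ hq1) (mem_Efin.1 (Finset.mem_filter.1 hf).1) ⟨hq2.1, hq2.2⟩
    apply keyS_lt_of_rp
    show rp I m.1 m.2 < rp I f.1 f.2
    rw [← hf1]
    exact hrp

theorem mem_not_RS {I : SPAST S P L} {M : Finset (S × P)} (hM : SuperStable I M)
    {m : S × P} (hmM : m ∈ M) : m ∉ RS I (XM I M) := by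
  intro hc
  obtain ⟨_, f, hf, hf1, hkey⟩ := Finset.mem_filter.1 hc
  by_cases hfm : f = m
  · rw [hfm] at hkey; omega
  · have := XM_min hM hmM hf hf1 hfm
    omega

theorem junk_RS {I : SPAST S P L} {M : Finset (S × P)} (hM : SuperStable I M)
    {e : S × P} (he : e ∈ XM I M) (heM : e ∉ M) : e ∈ RS I (XM I M) := by
  rcases (Finset.mem_filter.1 he).2 with h | ⟨q, hq1, hq2⟩
  · exact absurd h heM
  · refine Finset.mem_filter.2 ⟨he, (e.1, q), M_sub_XM hM.1 hq1, rfl, ?_⟩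
    apply keyS_lt_of_rp
    exact rp_lt_of_pB (hM.1.1 _ hq1) (mem_Efin.1 (Finset.mem_filter.1 he).1) ⟨hq2.1, hq2.2⟩

theorem fpY {I : SPAST S P L} {M : Finset (S × P)} (hM : SuperStable I M) :
    Efin I \ RS I (XM I M) = YM I M := by
  ext e
  simp only [Finset.mem_sdiff]
  constructor
  · rintro ⟨heE, hn⟩
    refine Finset.mem_filter.2 ⟨heE, ?_⟩
    by_cases heM : e ∈ M
    · exact Or.inl heM
    · right
      intro q hq hcontra
      have heX : e ∈ XM I M := Finset.mem_filter.2 ⟨heE, Or.inr ⟨q, hq, hcontra⟩⟩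
      exact hn (junk_RS hM heX heM)
  · intro he
    obtain ⟨heE, hcase⟩ := Finset.mem_filter.1 he
    refine ⟨heE, ?_⟩
    intro hc
    have heX : e ∈ XM I M := (Finset.mem_filter.1 hc).1
    rcases hcase with heM | hall
    · exact mem_not_RS hM heM hc
    · rcases (Finset.mem_filter.1 heX).2 with heM | ⟨q, hq1, hq2⟩
      · exact mem_not_RS hM heM hc
      · exact (hall q hq1) hq2

theorem CS_XM {I : SPAST S P L} {M : Finset (S × P)} (hM : SuperStable I M) :
    (XM I M) \ RS I (XM I M) = M := by
  ext e
  simp only [Finset.mem_sdiff]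
  constructor
  · rintro ⟨heX, hn⟩
    by_contra heM
    exact hn (junk_RS hM heX heM)
  · intro heM
    exact ⟨M_sub_XM hM.1 heM, mem_not_RS hM heM⟩


/-! ### cardinality of the student-side choice -/

theorem CS_card (I : SPAST S P L) (X : Finset (S × P)) :
    (X \ RS I X).card = (X.image Prod.fst).card := by
  apply Finset.card_bij (fun a _ => a.1)
  · intro a ha
    exact Finset.mem_image.2 ⟨a, (Finset.mem_sdiff.1 ha).1, rfl⟩
  · intro a ha b hb hab
    obtain ⟨haX, haR⟩ := Finset.mem_sdiff.1 ha
    obtain ⟨hbX, hbR⟩ := Finset.mem_sdiff.1 hb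
    by_contra hne
    have hkey : keyS I a ≠ keyS I b := fun h => hne (keyS_inj_same hab h)
    rcases lt_or_gt_of_ne hkey with h | h
    · exact hbR (Finset.mem_filter.2 ⟨hbX, a, haX, hab, h⟩)
    · exact haR (Finset.mem_filter.2 ⟨haX, b, hbX, hab.symm, h⟩)
  · intro s hs
    obtain ⟨a, haX, ha1⟩ := Finset.mem_image.1 hs
    have hne : (X.filter (fun x => x.1 = s)).Nonempty := ⟨a, Finset.mem_filter.2 ⟨haX, ha1⟩⟩
    obtain ⟨g, hg, hgmin⟩ := Finset.exists_min_image _ (keyS I) hne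
    obtain ⟨hgX, hg1⟩ := Finset.mem_filter.1 hg
    refine ⟨g, Finset.mem_sdiff.2 ⟨hgX, ?_⟩, hg1⟩
    intro hc
    obtain ⟨_, f, hfX, hf1, hkey⟩ := Finset.mem_filter.1 hc
    have hfmem : f ∈ X.filter (fun x => x.1 = s) :=
      Finset.mem_filter.2 ⟨hfX, by rw [hf1, hg1]⟩
    have := hgmin f hfmem
    omega

theorem CS_card_mono (I : SPAST S P L) {X X' : Finset (S × P)} (h : X ⊆ X') :
    (X \ RS I X).card ≤ (X' \ RS I X').card := by
  rw [CS_card, CS_card]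
  exact Finset.card_le_card (Finset.image_subset_image h)

/-! ### cardinality of the lecturer-side choice: the laminar greedy size formula -/

theorem filter_proj_erase {Y : Finset (S × P)} {e0 : S × P} {q : P} (h : ¬ e0.2 = q) :
    (Y.erase e0).filter (fun f => f.2 = q) = Y.filter (fun f => f.2 = q) := by
  rw [Finset.filter_erase]
  apply Finset.erase_eq_of_notMem
  intro hc
  exact h (Finset.mem_filter.1 hc).2

theorem CL_card (I : SPAST S P L) (Y : Finset (S × P)) :
    (Y \ RL I Y).card = ∑ k ∈ univ, min (I.d k)
      (∑ q ∈ univ.filter (fun q => I.lec q = k),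
        min (I.c q) ((Y.filter (fun f => f.2 = q)).card)) := by
  induction Y using Finset.strongInduction with
  | _ Y IH =>
  rcases Y.eq_empty_or_nonempty with rfl | hne
  · simp [RL]
  obtain ⟨e0, he0, hmax⟩ := Finset.exists_max_image Y (keyL I) hne
  set Z := Y.erase e0 with hZdef
  have hZY : Z ⊂ Y := Finset.erase_ssubset he0
  have IHZ := IH Z hZY
  have he0Z : e0 ∉ Z := Finset.notMem_erase _ _
  have hkeyZ : ∀ f ∈ Z, keyL I f < keyL I e0 := by
    intro f hf
    obtain ⟨hfne, hfY⟩ := Finset.mem_erase.1 hf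
    rcases lt_or_eq_of_le (hmax f hfY) with h | h
    · exact h
    · exact absurd (keyL_inj h) hfne
  have hY_ins : Y = insert e0 Z := by rw [hZdef, Finset.insert_erase he0]
  -- counts of elements of Z are unchanged
  have hcnt_eq : ∀ q : P, ∀ e ∈ Z, cnt I Y q e = cnt I Z q e := by
    intro q e he
    unfold cnt
    congr 1
    ext f
    simp only [Finset.mem_filter, hZdef, Finset.mem_erase]
    constructor
    · rintro ⟨hfY, h2, h3⟩
      refine ⟨⟨?_, hfY⟩, h2, h3⟩
      intro hfe
      rw [hfe] at h3
      have h4 := hkeyZ e he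
      omega
    · rintro ⟨⟨_, hfY⟩, h2, h3⟩
      exact ⟨hfY, h2, h3⟩
  have hrej_eq : ∀ e ∈ Z, (rej I Y e ↔ rej I Z e) := by
    intro e he
    have hq : ∀ q : P, cnt I Y q e = cnt I Z q e := fun q => hcnt_eq q e he
    unfold rej
    simp only [hq]
  -- count facts for e0
  have hcnt0 : ∀ q : P, cnt I Y q e0 = (Z.filter (fun f => f.2 = q)).card := by
    intro q
    unfold cnt
    congr 1
    ext f
    simp only [Finset.mem_filter, hZdef, Finset.mem_erase]
    constructor
    · rintro ⟨hfY, h2, h3⟩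
      refine ⟨⟨?_, hfY⟩, h2⟩
      intro hfe
      rw [hfe] at h3
      omega
    · rintro ⟨⟨hfne, hfY⟩, h2⟩
      refine ⟨hfY, h2, hkeyZ f (Finset.mem_erase.2 ⟨hfne, hfY⟩)⟩
  -- LHS splitting
  have hLHS : (Y \ RL I Y).card =
      (Z \ RL I Z).card + (if rej I Y e0 then 0 else 1) := by
    have h1 : Y \ RL I Y = Y.filter (fun e => ¬ rej I Y e) := by
      rw [Finset.filter_not]
      rfl
    have h2 : Z \ RL I Z = Z.filter (fun e => ¬ rej I Z e) := by
      rw [Finset.filter_not]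
      rfl
    have h3 : Z.filter (fun e => ¬ rej I Y e) = Z.filter (fun e => ¬ rej I Z e) := by
      apply Finset.filter_congr
      intro e he
      simp only [hrej_eq e he]
    rw [h1, h2, ← h3]
    have h4 : Y.filter (fun e => ¬ rej I Y e) =
        (insert e0 Z).filter (fun e => ¬ rej I Y e) := by rw [← hY_ins]
    rw [h4, Finset.filter_insert]
    by_cases hr : rej I Y e0
    · rw [if_neg (not_not_intro hr), if_pos hr]
      omega
    · rw [if_pos hr, if_neg hr]
      rw [Finset.card_insert_of_notMem (fun hc => he0Z (Finset.filter_subset _ _ hc))]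
  -- per-project count changes
  have hprojY : ∀ q : P, ¬ e0.2 = q →
      Y.filter (fun f => f.2 = q) = Z.filter (fun f => f.2 = q) := by
    intro q hq
    rw [hZdef, filter_proj_erase hq]
  have hprojY0 : (Y.filter (fun f => f.2 = e0.2)).card =
      (Z.filter (fun f => f.2 = e0.2)).card + 1 := by
    rw [hY_ins, Finset.filter_insert, if_pos rfl,
      Finset.card_insert_of_notMem (fun hc => he0Z (Finset.filter_subset _ _ hc))]
  -- abbreviations
  have hqmem : e0.2 ∈ univ.filter (fun q => I.lec q = I.lec e0.2) :=
    Finset.mem_filter.2 ⟨Finset.mem_univ _, rfl⟩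
  have hkmem : I.lec e0.2 ∈ (univ : Finset L) := Finset.mem_univ _
  -- RHS of the goal, decomposed
  have hgoalY : ∑ k ∈ univ, min (I.d k)
      (∑ q ∈ univ.filter (fun q => I.lec q = k),
        min (I.c q) ((Y.filter (fun f => f.2 = q)).card)) =
      min (I.d (I.lec e0.2))
        (min (I.c e0.2) ((Z.filter (fun f => f.2 = e0.2)).card + 1) +
          ∑ q ∈ (univ.filter (fun q => I.lec q = I.lec e0.2)).erase e0.2,
            min (I.c q) ((Z.filter (fun f => f.2 = q)).card)) +
      ∑ k ∈ univ.erase (I.lec e0.2), min (I.d k)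
        (∑ q ∈ univ.filter (fun q => I.lec q = k),
          min (I.c q) ((Z.filter (fun f => f.2 = q)).card)) := by
    rw [← Finset.add_sum_erase _ _ hkmem]
    congr 1
    · congr 1
      rw [← Finset.add_sum_erase _ _ hqmem]
      congr 1
      · rw [hprojY0]
      · apply Finset.sum_congr rfl
        intro q hq
        have hqne : q ≠ e0.2 := (Finset.mem_erase.1 hq).1
        rw [hprojY q (fun h => hqne h.symm)]
    · apply Finset.sum_congr rfl
      intro k hk
      have hkne : k ≠ I.lec e0.2 := (Finset.mem_erase.1 hk).1
      congr 1
      apply Finset.sum_congr rfl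
      intro q hq
      have hqq : ¬ e0.2 = q := by
        intro h
        apply hkne
        have h2 := (Finset.mem_filter.1 hq).2
        rw [← h2, ← h]
      rw [hprojY q hqq]
  have hgoalZ : ∑ k ∈ univ, min (I.d k)
      (∑ q ∈ univ.filter (fun q => I.lec q = k),
        min (I.c q) ((Z.filter (fun f => f.2 = q)).card)) =
      min (I.d (I.lec e0.2))
        (min (I.c e0.2) ((Z.filter (fun f => f.2 = e0.2)).card) +
          ∑ q ∈ (univ.filter (fun q => I.lec q = I.lec e0.2)).erase e0.2,
            min (I.c q) ((Z.filter (fun f => f.2 = q)).card)) +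
      ∑ k ∈ univ.erase (I.lec e0.2), min (I.d k)
        (∑ q ∈ univ.filter (fun q => I.lec q = k),
          min (I.c q) ((Z.filter (fun f => f.2 = q)).card)) := by
    rw [← Finset.add_sum_erase _ _ hkmem]
    congr 1
    congr 1
    rw [← Finset.add_sum_erase _ _ hqmem]
  have hrejchar : rej I Y e0 ↔ (I.c e0.2 ≤ (Z.filter (fun f => f.2 = e0.2)).card ∨
      I.d (I.lec e0.2) ≤ min (I.c e0.2) ((Z.filter (fun f => f.2 = e0.2)).card) +
        ∑ q ∈ (univ.filter (fun q => I.lec q = I.lec e0.2)).erase e0.2,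
          min (I.c q) ((Z.filter (fun f => f.2 = q)).card)) := by
    unfold rej
    simp only [hcnt0]
    rw [← Finset.add_sum_erase _ _ hqmem]
  rw [hLHS, hgoalY]
  rw [IHZ, hgoalZ]
  by_cases hr : rej I Y e0
  · rw [if_pos hr]
    rw [hrejchar] at hr
    omega
  · rw [if_neg hr]
    rw [hrejchar] at hr
    push_neg at hr
    omega

theorem CL_card_mono (I : SPAST S P L) {Y Y' : Finset (S × P)} (h : Y ⊆ Y') :
    (Y \ RL I Y).card ≤ (Y' \ RL I Y').card := by
  rw [CL_card, CL_card]
  apply Finset.sum_le_sum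
  intro k _
  apply min_le_min le_rfl
  apply Finset.sum_le_sum
  intro q _
  exact min_le_min le_rfl (Finset.card_le_card (Finset.filter_subset_filter _ h))


/-! ### iterating to a common fixed point -/

noncomputable def iter (I : SPAST S P L) : ℕ → Finset (S × P) × Finset (S × P)
  | 0 => (∅, Efin I)
  | n + 1 => (Efin I \ RL I (iter I n).2, Efin I \ RS I (iter I n).1)

theorem iter_E (I : SPAST S P L) (n : ℕ) :
    (iter I n).1 ⊆ Efin I ∧ (iter I n).2 ⊆ Efin I := by
  cases n with
  | zero => exact ⟨Finset.empty_subset _, Finset.Subset.refl _⟩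
  | succ n => exact ⟨Finset.sdiff_subset, Finset.sdiff_subset⟩

theorem iter_bound {I : SPAST S P L} {M : Finset (S × P)} (hM : SuperStable I M) :
    ∀ n, (iter I n).1 ⊆ XM I M ∧ YM I M ⊆ (iter I n).2 := by
  intro n
  induction n with
  | zero => exact ⟨Finset.empty_subset _, Finset.filter_subset _ _⟩
  | succ n ih =>
    constructor
    · intro e he
      obtain ⟨heE, hn⟩ := Finset.mem_sdiff.1 he
      rw [← fpX hM]
      exact Finset.mem_sdiff.2 ⟨heE, fun hc => hn (RL_mono I ih.2 hc)⟩
    · intro e he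
      rw [← fpY hM] at he
      obtain ⟨heE, hn⟩ := Finset.mem_sdiff.1 he
      exact Finset.mem_sdiff.2 ⟨heE, fun hc => hn (RS_mono I ih.1 hc)⟩

theorem iter_chain (I : SPAST S P L) :
    ∀ n, (iter I n).1 ⊆ (iter I (n + 1)).1 ∧ (iter I (n + 1)).2 ⊆ (iter I n).2 := by
  intro n
  induction n with
  | zero =>
    constructor
    · exact Finset.empty_subset _
    · exact Finset.sdiff_subset
  | succ n ih =>
    constructor
    · intro e he
      obtain ⟨heE, hn⟩ := Finset.mem_sdiff.1 he
      exact Finset.mem_sdiff.2 ⟨heE, fun hc => hn (RL_mono I ih.2 hc)⟩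
    · intro e he
      obtain ⟨heE, hn⟩ := Finset.mem_sdiff.1 he
      exact Finset.mem_sdiff.2 ⟨heE, fun hc => hn (RS_mono I ih.1 hc)⟩

theorem exists_stationary (I : SPAST S P L) : ∃ n, iter I n = iter I (n + 1) := by
  by_contra h
  push_neg at h
  set g : ℕ → ℕ := fun n =>
    (iter I n).1.card + ((Efin I).card - (iter I n).2.card) with hg
  have hstrict : ∀ n, g n < g (n + 1) := by
    intro n
    obtain ⟨h1, h2⟩ := iter_chain I n
    have hY1E : (iter I n).2 ⊆ Efin I := (iter_E I n).2
    have hc1 : (iter I n).1.card ≤ (iter I (n + 1)).1.card := Finset.card_le_card h1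
    have hc2 : (iter I (n + 1)).2.card ≤ (iter I n).2.card := Finset.card_le_card h2
    have hcE : (iter I n).2.card ≤ (Efin I).card := Finset.card_le_card hY1E
    have hne := h n
    have : (iter I n).1 ≠ (iter I (n + 1)).1 ∨ (iter I n).2 ≠ (iter I (n + 1)).2 := by
      by_contra hcc
      push_neg at hcc
      exact hne (Prod.ext hcc.1 hcc.2)
    rcases this with hne1 | hne2
    · have : (iter I n).1 ⊂ (iter I (n + 1)).1 := ssubset_of_subset_of_ne h1 hne1
      have := Finset.card_lt_card this
      simp only [hg]
      omega
    · have : (iter I (n + 1)).2 ⊂ (iter I n).2 :=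
        ssubset_of_subset_of_ne h2 (fun hcc => hne2 hcc.symm)
      have := Finset.card_lt_card this
      simp only [hg]
      omega
  have hbound : ∀ n, g n ≤ 2 * (Efin I).card := by
    intro n
    have h1 : (iter I n).1.card ≤ (Efin I).card := Finset.card_le_card (iter_E I n).1
    simp only [hg]
    omega
  have hlin : ∀ n, n ≤ g n := by
    intro n
    induction n with
    | zero => exact Nat.zero_le _
    | succ n ih =>
      have := hstrict n
      omega
  have ha := hlin (2 * (Efin I).card + 1)
  have hb := hbound (2 * (Efin I).card + 1)
  omega

end SSH

open SPAST in
theorem super_stable_card_eq {S P L : Type} [Fintype S] [Fintype P] [Fintype L]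
    [DecidableEq S] [DecidableEq P] [DecidableEq L]
    (I : SPAST S P L) (M1 M2 : Finset (S × P))
    (h1 : SuperStable I M1) (h2 : SuperStable I M2) :
    M1.card = M2.card := by
  classical
  obtain ⟨n, hstat⟩ := SSH.exists_stationary I
  have h1st : (SSH.iter I n).1 = (SSH.iter I (n + 1)).1 := congrArg Prod.fst hstat
  have h2nd : (SSH.iter I n).2 = (SSH.iter I (n + 1)).2 := congrArg Prod.snd hstat
  have hXfix : (SSH.iter I (n + 1)).1 =
      SSH.Efin I \ SSH.RL I ((SSH.iter I (n + 1)).2) := by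
    have h0 : (SSH.iter I (n + 1)).1 = SSH.Efin I \ SSH.RL I ((SSH.iter I n).2) := rfl
    rw [h0, h2nd]
  have hYfix : (SSH.iter I (n + 1)).2 =
      SSH.Efin I \ SSH.RS I ((SSH.iter I (n + 1)).1) := by
    have h0 : (SSH.iter I (n + 1)).2 = SSH.Efin I \ SSH.RS I ((SSH.iter I n).1) := rfl
    rw [h0, h1st]
  have hYsE : (SSH.iter I (n + 1)).2 ⊆ SSH.Efin I := (SSH.iter_E I (n + 1)).2
  have hXsE : (SSH.iter I (n + 1)).1 ⊆ SSH.Efin I := (SSH.iter_E I (n + 1)).1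
  have hint1 : (SSH.iter I (n + 1)).2 \ SSH.RL I ((SSH.iter I (n + 1)).2) =
      (SSH.iter I (n + 1)).1 ∩ (SSH.iter I (n + 1)).2 := by
    ext e
    simp only [Finset.mem_sdiff, Finset.mem_inter]
    constructor
    · rintro ⟨heY, hn⟩
      refine ⟨?_, heY⟩
      rw [hXfix]
      exact Finset.mem_sdiff.2 ⟨hYsE heY, hn⟩
    · rintro ⟨heX, heY⟩
      rw [hXfix] at heX
      exact ⟨heY, (Finset.mem_sdiff.1 heX).2⟩
  have hint2 : (SSH.iter I (n + 1)).1 \ SSH.RS I ((SSH.iter I (n + 1)).1) =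
      (SSH.iter I (n + 1)).1 ∩ (SSH.iter I (n + 1)).2 := by
    ext e
    simp only [Finset.mem_sdiff, Finset.mem_inter]
    constructor
    · rintro ⟨heX, hn⟩
      refine ⟨heX, ?_⟩
      rw [hYfix]
      exact Finset.mem_sdiff.2 ⟨hXsE heX, hn⟩
    · rintro ⟨heX, heY⟩
      rw [hYfix] at heY
      exact ⟨heX, (Finset.mem_sdiff.1 heY).2⟩
  have key : ∀ M : Finset (S × P), SuperStable I M →
      M.card = ((SSH.iter I (n + 1)).1 ∩ (SSH.iter I (n + 1)).2).card := by
    intro M hM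
    have hb := SSH.iter_bound hM (n + 1)
    have hA : M.card ≤ ((SSH.iter I (n + 1)).2 \ SSH.RL I ((SSH.iter I (n + 1)).2)).card := by
      calc M.card = ((SSH.YM I M) \ SSH.RL I (SSH.YM I M)).card := by rw [SSH.CL_YM hM]
      _ ≤ _ := SSH.CL_card_mono I hb.2
    have hB : ((SSH.iter I (n + 1)).1 \ SSH.RS I ((SSH.iter I (n + 1)).1)).card ≤ M.card := by
      calc ((SSH.iter I (n + 1)).1 \ SSH.RS I ((SSH.iter I (n + 1)).1)).card
          ≤ ((SSH.XM I M) \ SSH.RS I (SSH.XM I M)).card := SSH.CS_card_mono I hb.1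
      _ = M.card := by rw [SSH.CS_XM hM]
    rw [hint1] at hA
    rw [hint2] at hB
    omega
  rw [key M1 h1, key M2 h2]
end

section
/- Every instance of SPA-ST admits a weakly stable matching. -/
open scoped Classical

set_option linter.unusedSectionVars false
section Aux

open SPAST Finset

variable {S P L : Type} [Fintype S] [Fintype P] [Fintype L]
  [DecidableEq S] [DecidableEq P] [DecidableEq L]

lemma enc_lt {a b i j c : ℕ} (hi : i < c) (_ : j < c) (hab : a < b) :
    a * c + i < b * c + j := by
  calc a * c + i < a * c + c := by omega
    _ = (a + 1) * c := by ring
    _ ≤ b * c := Nat.mul_le_mul_right c hab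
    _ ≤ b * c + j := Nat.le_add_right _ _

lemma enc_inj {a b i j c : ℕ} (hi : i < c) (hj : j < c)
    (h : a * c + i = b * c + j) : i = j := by
  rcases lt_trichotomy a b with h' | h' | h'
  · exact absurd h (Nat.ne_of_lt (enc_lt hi hj h'))
  · subst h'; omega
  · exact absurd h.symm (Nat.ne_of_lt (enc_lt hj hi h'))

lemma mem_projAsg {M : Finset (S × P)} {p : P} {t : S} :
    t ∈ projAsg M p ↔ (t, p) ∈ M := by
  constructor
  · intro h
    obtain ⟨⟨a, b⟩, hab, ha⟩ := Finset.mem_image.mp h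
    obtain ⟨hm, hb⟩ := Finset.mem_filter.mp hab
    simp only at hb ha
    subst hb; subst ha; exact hm
  · intro h
    exact Finset.mem_image.mpr ⟨(t, p), Finset.mem_filter.mpr ⟨h, rfl⟩, rfl⟩

lemma mem_lecAsg {I : SPAST S P L} {M : Finset (S × P)} {k : L} {t : S} :
    t ∈ lecAsg I M k ↔ ∃ q, (t, q) ∈ M ∧ I.lec q = k := by
  constructor
  · intro h
    obtain ⟨⟨a, b⟩, hab, ha⟩ := Finset.mem_image.mp h
    obtain ⟨hm, hb⟩ := Finset.mem_filter.mp hab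
    simp only at hb ha
    subst ha; exact ⟨b, hm, hb⟩
  · rintro ⟨q, hm, hq⟩
    exact Finset.mem_image.mpr ⟨(t, q), Finset.mem_filter.mpr ⟨hm, hq⟩, rfl⟩

/-- index of a project -/
noncomputable def idxP (p : P) : ℕ := ((Fintype.equivFin P) p : ℕ)

lemma idxP_lt (p : P) : idxP p < Fintype.card P := ((Fintype.equivFin P) p).isLt

lemma idxP_inj {p q : P} (h : idxP p = idxP q) : p = q :=
  (Fintype.equivFin P).injective (Fin.ext h)

noncomputable def idxS (t : S) : ℕ := ((Fintype.equivFin S) t : ℕ)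

lemma idxS_lt (t : S) : idxS t < Fintype.card S := ((Fintype.equivFin S) t).isLt

lemma idxS_inj {t t' : S} (h : idxS t = idxS t') : t = t' :=
  (Fintype.equivFin S).injective (Fin.ext h)

/-- numeric key of project `p` for student `s`: smaller is better -/
noncomputable def kS (I : SPAST S P L) (s : S) (p : P) : ℕ :=
  ((I.acc s).filter (fun q => I.sPref s q p ∧ ¬ I.sPref s p q)).card * Fintype.card P + idxP p

lemma kS_inj {I : SPAST S P L} {s : S} {p q : P} (h : kS I s p = kS I s q) : p = q :=
  idxP_inj (enc_inj (idxP_lt p) (idxP_lt q) h)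

lemma kS_lt {I : SPAST S P L} {s : S} {p q : P} (hp : p ∈ I.acc s) (hq : q ∈ I.acc s)
    (h1 : I.sPref s p q) (h2 : ¬ I.sPref s q p) : kS I s p < kS I s q := by
  apply enc_lt (idxP_lt p) (idxP_lt q)
  apply Finset.card_lt_card
  rw [Finset.ssubset_iff_of_subset]
  · exact ⟨p, Finset.mem_filter.mpr ⟨hp, h1, h2⟩,
      fun hc => (Finset.mem_filter.mp hc).2.2 (I.sRefl s p hp)⟩
  · intro t ht
    obtain ⟨htacc, h3, h4⟩ := Finset.mem_filter.mp ht
    refine Finset.mem_filter.mpr ⟨htacc, ?_, ?_⟩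
    · exact I.sTrans s t htacc p hp q hq h3 h1
    · intro hqt
      exact h4 (I.sTrans s p hp q hq t htacc h1 hqt)

/-- relevance of student `t` to lecturer `k` -/
def relL (I : SPAST S P L) (k : L) (t : S) : Prop := ∃ p ∈ I.acc t, I.lec p = k

/-- numeric key of student `t` for lecturer `k`: smaller is better -/
noncomputable def kL (I : SPAST S P L) (k : L) (t : S) : ℕ :=
  (Finset.univ.filter (fun t' : S => relL I k t' ∧ I.lPref k t' t ∧ ¬ I.lPref k t t')).card
    * Fintype.card S + idxS t

lemma kL_inj {I : SPAST S P L} {k : L} {t t' : S} (h : kL I k t = kL I k t') : t = t' :=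
  idxS_inj (enc_inj (idxS_lt t) (idxS_lt t') h)

lemma kL_lt {I : SPAST S P L} {k : L} {t t' : S} (ht : relL I k t) (ht' : relL I k t')
    (h1 : I.lPref k t t') (h2 : ¬ I.lPref k t' t) : kL I k t < kL I k t' := by
  apply enc_lt (idxS_lt t) (idxS_lt t')
  apply Finset.card_lt_card
  rw [Finset.ssubset_iff_of_subset]
  · refine ⟨t, Finset.mem_filter.mpr ⟨Finset.mem_univ t, ht, h1, h2⟩, fun hc => ?_⟩
    exact (Finset.mem_filter.mp hc).2.2.2 (I.lRefl k t ht)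
  · intro x hx
    obtain ⟨hxu, hxrel, h3, h4⟩ := Finset.mem_filter.mp hx
    refine Finset.mem_filter.mpr ⟨hxu, hxrel, ?_, ?_⟩
    · exact I.lTrans k x t t' hxrel ht ht' h3 h1
    · intro hc
      exact h4 (I.lTrans k t t' x ht ht' hxrel h1 hc)

end Aux
section Aux2

open SPAST Finset

variable {S P L : Type} [Fintype S] [Fintype P] [Fintype L]
  [DecidableEq S] [DecidableEq P] [DecidableEq L]

lemma projAsg_insert_self {M : Finset (S × P)} {u : S} {r : P} :
    projAsg (insert (u, r) M) r = insert u (projAsg M r) := by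
  ext t
  rw [mem_projAsg, Finset.mem_insert, Finset.mem_insert, mem_projAsg]
  constructor
  · rintro (h | h)
    · exact Or.inl (congrArg Prod.fst h)
    · exact Or.inr h
  · rintro (rfl | h)
    · exact Or.inl rfl
    · exact Or.inr h

lemma projAsg_insert_ne {M : Finset (S × P)} {u : S} {r p : P} (h : p ≠ r) :
    projAsg (insert (u, r) M) p = projAsg M p := by
  ext t
  rw [mem_projAsg, Finset.mem_insert, mem_projAsg]
  constructor
  · rintro (heq | hm)
    · exact absurd (congrArg Prod.snd heq) h
    · exact hm
  · exact fun hm => Or.inr hm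

lemma lecAsg_insert_self {I : SPAST S P L} {M : Finset (S × P)} {u : S} {r : P} {k : L}
    (hk : I.lec r = k) :
    lecAsg I (insert (u, r) M) k = insert u (lecAsg I M k) := by
  ext t
  rw [mem_lecAsg, Finset.mem_insert]
  constructor
  · rintro ⟨q, hq, hlq⟩
    rcases Finset.mem_insert.mp hq with heq | hm
    · exact Or.inl (congrArg Prod.fst heq)
    · exact Or.inr (mem_lecAsg.mpr ⟨q, hm, hlq⟩)
  · rintro (rfl | h)
    · exact ⟨r, Finset.mem_insert_self _ _, hk⟩
    · obtain ⟨q, hm, hq⟩ := mem_lecAsg.mp h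
      exact ⟨q, Finset.mem_insert_of_mem hm, hq⟩

lemma lecAsg_insert_ne {I : SPAST S P L} {M : Finset (S × P)} {u : S} {r : P} {k : L}
    (hk : I.lec r ≠ k) :
    lecAsg I (insert (u, r) M) k = lecAsg I M k := by
  ext t
  rw [mem_lecAsg, mem_lecAsg]
  constructor
  · rintro ⟨q, hq, hlq⟩
    rcases Finset.mem_insert.mp hq with heq | hm
    · have h2 : q = r := congrArg Prod.snd heq
      rw [h2] at hlq; exact absurd hlq hk
    · exact ⟨q, hm, hlq⟩
  · rintro ⟨q, hm, hq⟩; exact ⟨q, Finset.mem_insert_of_mem hm, hq⟩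

lemma projAsg_erase_self {M : Finset (S × P)} {w : S} {rw : P} :
    projAsg (M.erase (w, rw)) rw = (projAsg M rw).erase w := by
  ext t
  rw [mem_projAsg, Finset.mem_erase, Finset.mem_erase, mem_projAsg]
  constructor
  · rintro ⟨hne, hm⟩
    exact ⟨fun h => hne (by rw [h]), hm⟩
  · rintro ⟨hne, hm⟩
    exact ⟨fun hc => hne (congrArg Prod.fst hc), hm⟩

lemma projAsg_erase_ne {M : Finset (S × P)} {w : S} {rw p : P} (h : p ≠ rw) :
    projAsg (M.erase (w, rw)) p = projAsg M p := by
  ext t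
  rw [mem_projAsg, Finset.mem_erase, mem_projAsg]
  constructor
  · rintro ⟨_, hm⟩; exact hm
  · intro hm; exact ⟨fun hc => h (congrArg Prod.snd hc), hm⟩

lemma lecAsg_erase_self {I : SPAST S P L} {M : Finset (S × P)} {w : S} {rw : P} {k : L}
    (huniq : ∀ s p q, (s, p) ∈ M → (s, q) ∈ M → p = q)
    (hm : (w, rw) ∈ M) (hk : I.lec rw = k) :
    lecAsg I (M.erase (w, rw)) k = (lecAsg I M k).erase w := by
  ext t
  rw [mem_lecAsg, Finset.mem_erase]
  constructor
  · rintro ⟨q, hq, hlq⟩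
    obtain ⟨hne, hqm⟩ := Finset.mem_erase.mp hq
    refine ⟨fun hc => ?_, mem_lecAsg.mpr ⟨q, hqm, hlq⟩⟩
    subst hc
    exact hne (by rw [huniq t q rw hqm hm])
  · rintro ⟨hne, ht⟩
    obtain ⟨q, hq, hlq⟩ := mem_lecAsg.mp ht
    exact ⟨q, Finset.mem_erase.mpr ⟨fun hc => hne (congrArg Prod.fst hc), hq⟩, hlq⟩

lemma lecAsg_erase_ne {I : SPAST S P L} {M : Finset (S × P)} {w : S} {rw : P} {k : L}
    (hk : I.lec rw ≠ k) :
    lecAsg I (M.erase (w, rw)) k = lecAsg I M k := by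
  ext t
  rw [mem_lecAsg, mem_lecAsg]
  constructor
  · rintro ⟨q, hq, hlq⟩
    exact ⟨q, Finset.mem_of_mem_erase hq, hlq⟩
  · rintro ⟨q, hq, hlq⟩
    refine ⟨q, Finset.mem_erase.mpr ⟨fun hc => hk ?_, hq⟩, hlq⟩
    have h2 : q = rw := congrArg Prod.snd hc
    rw [← h2]; exact hlq

/-- the rejection invariant recorded for a pair `(s₀, p₀)` deleted from `s₀`'s list -/
def Rej (I : SPAST S P L) (M : Finset (S × P)) (s0 : S) (p0 : P) : Prop :=
  (∀ t ∈ projAsg M p0, kL I (I.lec p0) t < kL I (I.lec p0) s0) ∧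
  ((projAsg M p0).card = I.c p0 ∨
    ((lecAsg I M (I.lec p0)).card = I.d (I.lec p0) ∧
     ∀ t ∈ lecAsg I M (I.lec p0), kL I (I.lec p0) t < kL I (I.lec p0) s0))

/-- invariant of the deferred-acceptance execution state -/
def Good (I : SPAST S P L) (M : Finset (S × P)) (A : S → Finset P) : Prop :=
  (∀ x ∈ M, x.2 ∈ I.acc x.1) ∧
  (∀ s p q, (s, p) ∈ M → (s, q) ∈ M → p = q) ∧
  (∀ p, (projAsg M p).card ≤ I.c p) ∧
  (∀ k, (lecAsg I M k).card ≤ I.d k) ∧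
  (∀ s, A s ⊆ I.acc s) ∧
  (∀ s p, (s, p) ∈ M → p ∈ A s ∧ ∀ q ∈ A s, kS I s p ≤ kS I s q) ∧
  (∀ s p, p ∈ I.acc s → p ∉ A s → Rej I M s p)

/-- unmatched students -/
def Unm (M : Finset (S × P)) : Finset S :=
  Finset.univ.filter (fun s => ∀ p, (s, p) ∉ M)

/-- termination measure -/
def meas (M : Finset (S × P)) (A : S → Finset P) : ℕ :=
  (∑ s, (A s).card) + (Unm M).card

end Aux2
section Aux3

open SPAST Finset

variable {S P L : Type} [Fintype S] [Fintype P] [Fintype L]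
  [DecidableEq S] [DecidableEq P] [DecidableEq L]

lemma meas_evict {M : Finset (S × P)} {A : S → Finset P} {u w : S} {r rw : P}
    (hu : ∀ p, (u, p) ∉ M) (hwA : rw ∈ A w) :
    meas ((insert (u, r) M).erase (w, rw)) (Function.update A w ((A w).erase rw)) < meas M A := by
  have hsum : (∑ s, (Function.update A w ((A w).erase rw) s).card) + 1 = ∑ s, (A s).card := by
    have key : ∀ s, (Function.update A w ((A w).erase rw) s).card
        = Function.update (fun s => (A s).card) w ((A w).erase rw).card s := by
      intro s
      by_cases h : s = w
      · subst h; rw [Function.update_self, Function.update_self]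
      · rw [Function.update_of_ne h, Function.update_of_ne h]
    rw [Finset.sum_congr rfl (fun s _ => key s),
      Finset.sum_update_of_mem (Finset.mem_univ w),
      ← Finset.add_sum_erase _ _ (Finset.mem_univ w),
      Finset.sdiff_singleton_eq_erase, Finset.card_erase_of_mem hwA]
    have h1 : 1 ≤ (A w).card := Finset.card_pos.mpr ⟨rw, hwA⟩
    omega
  have huU : u ∈ Unm M := Finset.mem_filter.mpr ⟨Finset.mem_univ u, hu⟩
  have hsub : Unm ((insert (u, r) M).erase (w, rw)) ⊆ insert w ((Unm M).erase u) := by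
    intro s hs
    have hs' : ∀ p, (s, p) ∉ (insert (u, r) M).erase (w, rw) := (Finset.mem_filter.mp hs).2
    by_cases hsw : s = w
    · exact Finset.mem_insert.mpr (Or.inl hsw)
    · refine Finset.mem_insert.mpr (Or.inr (Finset.mem_erase.mpr ⟨?_, ?_⟩))
      · rintro rfl
        refine hs' r (Finset.mem_erase.mpr ⟨?_, Finset.mem_insert_self _ _⟩)
        exact fun hc => hsw (congrArg Prod.fst hc)
      · refine Finset.mem_filter.mpr ⟨Finset.mem_univ s, fun p hp => ?_⟩
        refine hs' p (Finset.mem_erase.mpr ⟨?_, Finset.mem_insert_of_mem hp⟩)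
        exact fun hc => hsw (congrArg Prod.fst hc)
  have hcard : (Unm ((insert (u, r) M).erase (w, rw))).card ≤ (Unm M).card := by
    have h2 : 1 ≤ (Unm M).card := Finset.card_pos.mpr ⟨u, huU⟩
    calc (Unm ((insert (u, r) M).erase (w, rw))).card
        ≤ (insert w ((Unm M).erase u)).card := Finset.card_le_card hsub
      _ ≤ ((Unm M).erase u).card + 1 := Finset.card_insert_le _ _
      _ = (Unm M).card := by rw [Finset.card_erase_of_mem huU]; omega
  unfold meas
  omega

lemma step (I : SPAST S P L) (M : Finset (S × P)) (A : S → Finset P) (hg : Good I M A)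
    (u : S) (hu : ∀ p, (u, p) ∉ M) (hne : (A u).Nonempty) :
    ∃ M' A', Good I M' A' ∧ meas M' A' < meas M A := by
  obtain ⟨g1, g2, g3, g4, g5, g6, g7⟩ := hg
  obtain ⟨r, hrA, hrmin⟩ := Finset.exists_min_image (A u) (kS I u) hne
  have hrAcc : r ∈ I.acc u := g5 u hrA
  set M1 := insert (u, r) M with hM1def
  have g1M1 : ∀ x ∈ M1, x.2 ∈ I.acc x.1 := by
    intro x hx
    rcases Finset.mem_insert.mp hx with rfl | hx'
    · exact hrAcc
    · exact g1 x hx'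
  have g2M1 : ∀ s p q, (s, p) ∈ M1 → (s, q) ∈ M1 → p = q := by
    intro s p q hp hq
    rcases Finset.mem_insert.mp hp with h1 | h1 <;> rcases Finset.mem_insert.mp hq with h2 | h2
    · have e1 : p = r := congrArg Prod.snd h1
      have e2 : q = r := congrArg Prod.snd h2
      rw [e1, e2]
    · have e1 : s = u := congrArg Prod.fst h1
      subst e1; exact absurd h2 (hu q)
    · have e2 : s = u := congrArg Prod.fst h2
      subst e2; exact absurd h1 (hu p)
    · exact g2 s p q h1 h2
  have huprojM : ∀ p, u ∉ projAsg M p := fun p h => hu p (mem_projAsg.mp h)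
  have hulecM : ∀ k, u ∉ lecAsg I M k := by
    intro k h; obtain ⟨q, hq, _⟩ := mem_lecAsg.mp h; exact hu q hq
  have hlec1 : lecAsg I M1 (I.lec r) = insert u (lecAsg I M (I.lec r)) := lecAsg_insert_self rfl
  have hlec1card : (lecAsg I M1 (I.lec r)).card = (lecAsg I M (I.lec r)).card + 1 := by
    rw [hlec1, Finset.card_insert_of_notMem (hulecM _)]
  have hproj1 : projAsg M1 r = insert u (projAsg M r) := projAsg_insert_self
  have hproj1card : (projAsg M1 r).card = (projAsg M r).card + 1 := by
    rw [hproj1, Finset.card_insert_of_notMem (huprojM r)]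
  by_cases hA : I.c r < (projAsg M1 r).card
  · -- project r oversubscribed: evict worst of M1(r)
    have hfull : (projAsg M r).card = I.c r := le_antisymm (g3 r) (by omega)
    obtain ⟨w, hwmem, hwmax⟩ := Finset.exists_max_image (projAsg M1 r) (kL I (I.lec r))
      ⟨u, by rw [hproj1]; exact Finset.mem_insert_self _ _⟩
    have hwM1 : (w, r) ∈ M1 := mem_projAsg.mp hwmem
    have hwacc : r ∈ I.acc w := g1M1 _ hwM1
    have hwA : r ∈ A w := by
      by_cases hwu : w = u
      · subst hwu; exact hrA
      · have hwm : (w, r) ∈ M := by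
          rcases Finset.mem_insert.mp hwM1 with heq | h
          · exact absurd (congrArg Prod.fst heq) hwu
          · exact h
        exact (g6 w r hwm).1
    set M2 := M1.erase (w, r) with hM2def
    set A2 := Function.update A w ((A w).erase r) with hA2def
    have g2M2 : ∀ s p q, (s, p) ∈ M2 → (s, q) ∈ M2 → p = q :=
      fun s p q hp hq => g2M1 s p q (Finset.mem_of_mem_erase hp) (Finset.mem_of_mem_erase hq)
    have eproj2 : projAsg M2 r = (projAsg M1 r).erase w := projAsg_erase_self
    have eproj2' : ∀ p, p ≠ r → projAsg M2 p = projAsg M p := fun p hp =>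
      (projAsg_erase_ne hp).trans (projAsg_insert_ne hp)
    have elec2 : lecAsg I M2 (I.lec r) = (lecAsg I M1 (I.lec r)).erase w :=
      lecAsg_erase_self g2M1 hwM1 rfl
    have elec2' : ∀ k, k ≠ I.lec r → lecAsg I M2 k = lecAsg I M k := by
      intro k hk
      have h1 : I.lec r ≠ k := fun hc => hk hc.symm
      exact (lecAsg_erase_ne h1).trans (lecAsg_insert_ne h1)
    have hproj2card : (projAsg M2 r).card = I.c r := by
      rw [eproj2, Finset.card_erase_of_mem hwmem]; omega
    have hwlec1 : w ∈ lecAsg I M1 (I.lec r) := mem_lecAsg.mpr ⟨r, hwM1, rfl⟩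
    have hlec2card : (lecAsg I M2 (I.lec r)).card = (lecAsg I M (I.lec r)).card := by
      rw [elec2, Finset.card_erase_of_mem hwlec1]; omega
    have hwstrict : ∀ t ∈ projAsg M1 r, t ≠ w → kL I (I.lec r) t < kL I (I.lec r) w :=
      fun t ht htw => lt_of_le_of_ne (hwmax t ht) (fun hc => htw (kL_inj hc))
    refine ⟨M2, A2, ⟨?_, g2M2, ?_, ?_, ?_, ?_, ?_⟩, meas_evict hu hwA⟩
    · exact fun x hx => g1M1 x (Finset.mem_of_mem_erase hx)
    · intro p
      by_cases hp : p = r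
      · subst hp; rw [hproj2card]
      · rw [eproj2' p hp]; exact g3 p
    · intro k
      by_cases hk : k = I.lec r
      · subst hk; rw [hlec2card]; exact g4 _
      · rw [elec2' k hk]; exact g4 k
    · intro s
      have hsub : A2 s ⊆ A s := by
        by_cases h : s = w
        · subst h; rw [hA2def, Function.update_self]; exact Finset.erase_subset _ _
        · rw [hA2def, Function.update_of_ne h]
      exact hsub.trans (g5 s)
    · intro s p hsp
      have hsp1 : (s, p) ∈ M1 := Finset.mem_of_mem_erase hsp
      have hnepair : (s, p) ≠ (w, r) := (Finset.mem_erase.mp hsp).1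
      have hsw : s ≠ w := by
        rintro rfl
        exact hnepair (by rw [g2M1 s p r hsp1 hwM1])
      have hA2s : A2 s = A s := by rw [hA2def, Function.update_of_ne hsw]
      rw [hA2s]
      rcases Finset.mem_insert.mp hsp1 with heq | hmem
      · have e1 : s = u := congrArg Prod.fst heq
        have e2 : p = r := congrArg Prod.snd heq
        subst e1; subst e2
        exact ⟨hrA, hrmin⟩
      · exact g6 s p hmem
    · intro s0 p0 hacc0 hnot0
      by_cases hnew : s0 = w ∧ p0 = r
      · obtain ⟨rfl, rfl⟩ := hnew
        constructor
        · intro t ht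
          rw [eproj2] at ht
          exact hwstrict t (Finset.mem_of_mem_erase ht) (Finset.mem_erase.mp ht).1
        · exact Or.inl hproj2card
      · have hold : p0 ∉ A s0 := by
          by_cases hs0 : s0 = w
          · subst hs0
            rw [hA2def, Function.update_self] at hnot0
            intro hc
            have hp0r : p0 ≠ r := fun h => hnew ⟨rfl, h⟩
            exact hnot0 (Finset.mem_erase.mpr ⟨hp0r, hc⟩)
          · rw [hA2def, Function.update_of_ne hs0] at hnot0; exact hnot0
        have old := g7 s0 p0 hacc0 hold
        by_cases hk0 : I.lec p0 = I.lec r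
        · by_cases hp0 : p0 = r
          · subst hp0
            constructor
            · intro t ht
              rw [eproj2, hproj1] at ht
              have htw : t ≠ w := (Finset.mem_erase.mp ht).1
              rcases Finset.mem_insert.mp (Finset.mem_of_mem_erase ht) with rfl | htm
              · have hwu : w ≠ t := fun hc => htw hc.symm
                have hwm : w ∈ projAsg M p0 := by
                  rcases Finset.mem_insert.mp (hproj1 ▸ hwmem) with hc | h
                  · exact absurd hc hwu
                  · exact h
                have h1 : kL I (I.lec p0) t < kL I (I.lec p0) w :=
                  hwstrict t (by rw [hproj1]; exact Finset.mem_insert_self _ _) htw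
                exact lt_trans h1 (old.1 w hwm)
              · exact old.1 t htm
            · exact Or.inl hproj2card
          · have e1 : projAsg M2 p0 = projAsg M p0 := eproj2' p0 hp0
            constructor
            · rw [e1]; exact old.1
            · rcases old.2 with hc | ⟨hd, hall⟩
              · exact Or.inl (by rw [e1]; exact hc)
              · refine Or.inr ⟨?_, ?_⟩
                · rw [hk0, hlec2card, ← hk0]; exact hd
                · intro t ht
                  rw [hk0, elec2, hlec1] at ht
                  have htw : t ≠ w := (Finset.mem_erase.mp ht).1
                  rcases Finset.mem_insert.mp (Finset.mem_of_mem_erase ht) with rfl | htm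
                  · have hwu : w ≠ t := fun hc => htw hc.symm
                    have hwm : w ∈ projAsg M r := by
                      rcases Finset.mem_insert.mp (hproj1 ▸ hwmem) with hc | h
                      · exact absurd hc hwu
                      · exact h
                    have hwlecM : w ∈ lecAsg I M (I.lec p0) := by
                      rw [hk0]
                      exact mem_lecAsg.mpr ⟨r, mem_projAsg.mp hwm, rfl⟩
                    have h1 : kL I (I.lec p0) t < kL I (I.lec p0) w := by
                      rw [hk0]
                      exact hwstrict t (by rw [hproj1]; exact Finset.mem_insert_self _ _) htw
                    exact lt_trans h1 (hall w hwlecM)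
                  · exact hall t (by rw [hk0]; exact htm)
        · have hp0r : p0 ≠ r := fun hc => hk0 (by rw [hc])
          have e1 : projAsg M2 p0 = projAsg M p0 := eproj2' p0 hp0r
          have e2 : lecAsg I M2 (I.lec p0) = lecAsg I M (I.lec p0) := elec2' _ hk0
          constructor
          · rw [e1]; exact old.1
          · rcases old.2 with hc | ⟨hd, hall⟩
            · exact Or.inl (by rw [e1]; exact hc)
            · exact Or.inr ⟨by rw [e2]; exact hd, by rw [e2]; exact hall⟩
  · by_cases hB : I.d (I.lec r) < (lecAsg I M1 (I.lec r)).card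
    · -- lecturer oversubscribed: evict worst of M1(lec r)
      have hdfull : (lecAsg I M (I.lec r)).card = I.d (I.lec r) := le_antisymm (g4 _) (by omega)
      obtain ⟨w, hwmem, hwmax⟩ := Finset.exists_max_image (lecAsg I M1 (I.lec r)) (kL I (I.lec r))
        ⟨u, by rw [hlec1]; exact Finset.mem_insert_self _ _⟩
      obtain ⟨rw, hwM1, hlecrw⟩ := mem_lecAsg.mp hwmem
      have hwacc : rw ∈ I.acc w := g1M1 _ hwM1
      have hwA : rw ∈ A w := by
        by_cases hwu : w = u
        · subst hwu
          rcases Finset.mem_insert.mp hwM1 with heq | h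
          · have e : rw = r := congrArg Prod.snd heq
            rw [e]; exact hrA
          · exact absurd h (hu rw)
        · have hwm : (w, rw) ∈ M := by
            rcases Finset.mem_insert.mp hwM1 with heq | h
            · exact absurd (congrArg Prod.fst heq) hwu
            · exact h
          exact (g6 w rw hwm).1
      set M2 := M1.erase (w, rw) with hM2def
      set A2 := Function.update A w ((A w).erase rw) with hA2def
      have g2M2 : ∀ s p q, (s, p) ∈ M2 → (s, q) ∈ M2 → p = q :=
        fun s p q hp hq => g2M1 s p q (Finset.mem_of_mem_erase hp) (Finset.mem_of_mem_erase hq)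
      have eproj1 : ∀ p, p ≠ r → projAsg M1 p = projAsg M p := fun p hp => projAsg_insert_ne hp
      have eproj2' : ∀ p, p ≠ rw → projAsg M2 p = projAsg M1 p := fun p hp => projAsg_erase_ne hp
      have elec2 : lecAsg I M2 (I.lec r) = (lecAsg I M1 (I.lec r)).erase w :=
        lecAsg_erase_self g2M1 hwM1 hlecrw
      have elec2' : ∀ k, k ≠ I.lec r → lecAsg I M2 k = lecAsg I M k := by
        intro k hk
        have h1 : I.lec rw ≠ k := fun hc => hk ((hlecrw.symm.trans hc).symm ▸ rfl)
        have h2 : I.lec r ≠ k := fun hc => hk hc.symm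
        exact (lecAsg_erase_ne h1).trans (lecAsg_insert_ne h2)
      have hlec2card : (lecAsg I M2 (I.lec r)).card = I.d (I.lec r) := by
        rw [elec2, Finset.card_erase_of_mem hwmem]; omega
      have hwstrict : ∀ t ∈ lecAsg I M1 (I.lec r), t ≠ w → kL I (I.lec r) t < kL I (I.lec r) w :=
        fun t ht htw => lt_of_le_of_ne (hwmax t ht) (fun hc => htw (kL_inj hc))
      have hall2 : ∀ t ∈ lecAsg I M2 (I.lec r), kL I (I.lec r) t < kL I (I.lec r) w := by
        intro t ht
        rw [elec2] at ht
        exact hwstrict t (Finset.mem_of_mem_erase ht) (Finset.mem_erase.mp ht).1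
      have hprojsub : ∀ p, I.lec p = I.lec r → ∀ t ∈ projAsg M2 p, t ∈ lecAsg I M2 (I.lec r) := by
        intro p hp t ht
        exact mem_lecAsg.mpr ⟨p, mem_projAsg.mp ht, hp⟩
      refine ⟨M2, A2, ⟨?_, g2M2, ?_, ?_, ?_, ?_, ?_⟩, meas_evict hu hwA⟩
      · exact fun x hx => g1M1 x (Finset.mem_of_mem_erase hx)
      · intro p
        have h1 : (projAsg M1 p).card ≤ I.c p := by
          by_cases hp : p = r
          · subst hp; omega
          · rw [eproj1 p hp]; exact g3 p
        by_cases hp : p = rw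
        · subst hp
          calc (projAsg M2 p).card ≤ (projAsg M1 p).card := by
                rw [projAsg_erase_self]; exact Finset.card_erase_le.trans le_rfl
            _ ≤ I.c p := h1
        · rw [eproj2' p hp]; exact h1
      · intro k
        by_cases hk : k = I.lec r
        · subst hk; rw [hlec2card]
        · rw [elec2' k hk]; exact g4 k
      · intro s
        have hsub : A2 s ⊆ A s := by
          by_cases h : s = w
          · subst h; rw [hA2def, Function.update_self]; exact Finset.erase_subset _ _
          · rw [hA2def, Function.update_of_ne h]
        exact hsub.trans (g5 s)
      · intro s p hsp
        have hsp1 : (s, p) ∈ M1 := Finset.mem_of_mem_erase hsp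
        have hnepair : (s, p) ≠ (w, rw) := (Finset.mem_erase.mp hsp).1
        have hsw : s ≠ w := by
          rintro rfl
          exact hnepair (by rw [g2M1 s p rw hsp1 hwM1])
        have hA2s : A2 s = A s := by rw [hA2def, Function.update_of_ne hsw]
        rw [hA2s]
        rcases Finset.mem_insert.mp hsp1 with heq | hmem
        · have e1 : s = u := congrArg Prod.fst heq
          have e2 : p = r := congrArg Prod.snd heq
          subst e1; subst e2
          exact ⟨hrA, hrmin⟩
        · exact g6 s p hmem
      · intro s0 p0 hacc0 hnot0
        by_cases hnew : s0 = w ∧ p0 = rw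
        · obtain ⟨rfl, rfl⟩ := hnew
          have hkey : I.lec p0 = I.lec r := hlecrw
          constructor
          · intro t ht
            rw [hkey]
            exact hall2 t (hprojsub p0 hkey t ht)
          · refine Or.inr ⟨?_, ?_⟩
            · rw [hkey, hlec2card]
            · intro t ht
              rw [hkey] at ht ⊢
              exact hall2 t ht
        · have hold : p0 ∉ A s0 := by
            by_cases hs0 : s0 = w
            · subst hs0
              rw [hA2def, Function.update_self] at hnot0
              intro hc
              have hp0r : p0 ≠ rw := fun h => hnew ⟨rfl, h⟩
              exact hnot0 (Finset.mem_erase.mpr ⟨hp0r, hc⟩)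
            · rw [hA2def, Function.update_of_ne hs0] at hnot0; exact hnot0
          have old := g7 s0 p0 hacc0 hold
          by_cases hk0 : I.lec p0 = I.lec r
          · rcases old.2 with hc | ⟨hd, hall⟩
            · -- old project full; so p0 ≠ r
              have hp0r : p0 ≠ r := by
                rintro rfl
                omega
              by_cases hpw : p0 = rw
              · -- evictee came from p0 : replace by lecturer-full clause
                have hwM : (w, rw) ∈ M := by
                  rcases Finset.mem_insert.mp hwM1 with heq | h
                  · exfalso
                    exact hp0r (hpw.trans (congrArg Prod.snd heq))
                  · exact h
                have hwproj : w ∈ projAsg M p0 := by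
                  rw [hpw]; exact mem_projAsg.mpr hwM
                have hwlt : kL I (I.lec p0) w < kL I (I.lec p0) s0 := old.1 w hwproj
                have hsub0 : projAsg M2 p0 ⊆ projAsg M p0 := by
                  rw [hpw, projAsg_erase_self, eproj1 rw (fun hc => hp0r (hpw.trans hc))]
                  exact Finset.erase_subset _ _
                constructor
                · exact fun t ht => old.1 t (hsub0 ht)
                · refine Or.inr ⟨?_, ?_⟩
                  · rw [hk0, hlec2card]
                  · intro t ht
                    rw [hk0] at ht
                    have h1 : kL I (I.lec r) t < kL I (I.lec r) w := hall2 t ht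
                    rw [hk0]
                    exact lt_trans h1 (by rw [← hk0]; exact hwlt)
              · have e1 : projAsg M2 p0 = projAsg M p0 :=
                  (eproj2' p0 hpw).trans (eproj1 p0 hp0r)
                constructor
                · rw [e1]; exact old.1
                · exact Or.inl (by rw [e1]; exact hc)
            · -- old lecturer-full clause
              have hall' : ∀ t ∈ lecAsg I M2 (I.lec r), kL I (I.lec r) t < kL I (I.lec r) s0 := by
                intro t ht
                rw [elec2, hlec1] at ht
                have htw : t ≠ w := (Finset.mem_erase.mp ht).1
                rcases Finset.mem_insert.mp (Finset.mem_of_mem_erase ht) with rfl | htm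
                · have hwu : w ≠ t := fun hc => htw hc.symm
                  have hwmM : w ∈ lecAsg I M (I.lec r) := by
                    rcases Finset.mem_insert.mp (hlec1 ▸ hwmem) with hc' | h
                    · exact absurd hc' hwu
                    · exact h
                  have h1 : kL I (I.lec r) t < kL I (I.lec r) w :=
                    hwstrict t (by rw [hlec1]; exact Finset.mem_insert_self _ _) htw
                  have h2 : kL I (I.lec r) w < kL I (I.lec r) s0 := by
                    have := hall w (by rw [hk0]; exact hwmM)
                    rw [hk0] at this; exact this
                  exact lt_trans h1 h2
                · have := hall t (by rw [hk0]; exact htm)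
                  rw [hk0] at this; exact this
              constructor
              · intro t ht
                rw [hk0]
                exact hall' t (hprojsub p0 hk0 t ht)
              · refine Or.inr ⟨?_, ?_⟩
                · rw [hk0, hlec2card]
                · intro t ht
                  rw [hk0] at ht ⊢
                  exact hall' t ht
          · have hp0r : p0 ≠ r := fun hc => hk0 (by rw [hc])
            have hp0rw : p0 ≠ rw := fun hc => hk0 (by rw [hc]; exact hlecrw)
            have e1 : projAsg M2 p0 = projAsg M p0 :=
              (eproj2' p0 hp0rw).trans (eproj1 p0 hp0r)
            have e2 : lecAsg I M2 (I.lec p0) = lecAsg I M (I.lec p0) := elec2' _ hk0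
            constructor
            · rw [e1]; exact old.1
            · rcases old.2 with hc | ⟨hd, hall⟩
              · exact Or.inl (by rw [e1]; exact hc)
              · exact Or.inr ⟨by rw [e2]; exact hd, by rw [e2]; exact hall⟩
    · -- no eviction
      refine ⟨M1, A, ⟨g1M1, g2M1, ?_, ?_, g5, ?_, ?_⟩, ?_⟩
      · intro p
        by_cases hp : p = r
        · subst hp; omega
        · rw [projAsg_insert_ne hp]; exact g3 p
      · intro k
        by_cases hk : k = I.lec r
        · subst hk; omega
        · rw [lecAsg_insert_ne (fun hc => hk hc.symm)]; exact g4 k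
      · intro s p hsp
        rcases Finset.mem_insert.mp hsp with heq | hmem
        · have e1 : s = u := congrArg Prod.fst heq
          have e2 : p = r := congrArg Prod.snd heq
          subst e1; subst e2
          exact ⟨hrA, hrmin⟩
        · exact g6 s p hmem
      · intro s0 p0 hacc0 hnot0
        have old := g7 s0 p0 hacc0 hnot0
        by_cases hk0 : I.lec p0 = I.lec r
        · rcases old.2 with hc | ⟨hd, hall⟩
          · have hp0r : p0 ≠ r := by
              rintro rfl
              omega
            have e1 : projAsg M1 p0 = projAsg M p0 := projAsg_insert_ne hp0r
            exact ⟨by rw [e1]; exact old.1, Or.inl (by rw [e1]; exact hc)⟩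
          · exfalso
            rw [hk0] at hd
            omega
        · have hp0r : p0 ≠ r := fun hc => hk0 (by rw [hc])
          have e1 : projAsg M1 p0 = projAsg M p0 := projAsg_insert_ne hp0r
          have e2 : lecAsg I M1 (I.lec p0) = lecAsg I M (I.lec p0) :=
            lecAsg_insert_ne (fun hc => hk0 hc.symm)
          constructor
          · rw [e1]; exact old.1
          · rcases old.2 with hc | ⟨hd, hall⟩
            · exact Or.inl (by rw [e1]; exact hc)
            · exact Or.inr ⟨by rw [e2]; exact hd, by rw [e2]; exact hall⟩
      · -- measure decreases
        have huU : u ∈ Unm M := Finset.mem_filter.mpr ⟨Finset.mem_univ u, hu⟩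
        have hnotin : u ∉ Unm M1 := by
          intro h
          exact (Finset.mem_filter.mp h).2 r (Finset.mem_insert_self _ _)
        have hsub : Unm M1 ⊆ Unm M := by
          intro s hs
          refine Finset.mem_filter.mpr ⟨Finset.mem_univ s, fun p hp => ?_⟩
          exact (Finset.mem_filter.mp hs).2 p (Finset.mem_insert_of_mem hp)
        have hss : Unm M1 ⊂ Unm M := (Finset.ssubset_iff_of_subset hsub).mpr ⟨u, huU, hnotin⟩
        have := Finset.card_lt_card hss
        unfold meas
        omega

end Aux3
section Aux4

open SPAST Finset

variable {S P L : Type} [Fintype S] [Fintype P] [Fintype L]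
  [DecidableEq S] [DecidableEq P] [DecidableEq L]

lemma reach (I : SPAST S P L) :
    ∀ n (M : Finset (S × P)) (A : S → Finset P), Good I M A → meas M A ≤ n →
    ∃ M' A', Good I M' A' ∧ ∀ s, (∀ p, (s, p) ∉ M') → A' s = ∅ := by
  intro n
  induction n with
  | zero =>
      intro M A hg hm
      by_cases ht : ∀ s, (∀ p, (s, p) ∉ M) → A s = ∅
      · exact ⟨M, A, hg, ht⟩
      · push_neg at ht
        obtain ⟨s, hs1, hs2⟩ := ht
        obtain ⟨M', A', _, hlt⟩ := step I M A hg s hs1 hs2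
        omega
  | succ n ih =>
      intro M A hg hm
      by_cases ht : ∀ s, (∀ p, (s, p) ∉ M) → A s = ∅
      · exact ⟨M, A, hg, ht⟩
      · push_neg at ht
        obtain ⟨s, hs1, hs2⟩ := ht
        obtain ⟨M', A', hg', hlt⟩ := step I M A hg s hs1 hs2
        exact ih M' A' hg' (by omega)

lemma stable_of_terminal (I : SPAST S P L) (M : Finset (S × P)) (A : S → Finset P)
    (hg : Good I M A) (ht : ∀ s, (∀ p, (s, p) ∉ M) → A s = ∅) : WeaklyStable I M := by
  obtain ⟨g1, g2, g3, g4, g5, g6, g7⟩ := hg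
  constructor
  · refine ⟨g1, g2, ?_, ?_⟩
    · intro p
      have e : (M.filter (fun x => x.2 = p)).card = (projAsg M p).card := by
        refine (Finset.card_image_of_injOn ?_).symm
        intro x hx y hy hxy
        have hx2 : x.2 = p := (Finset.mem_filter.mp hx).2
        have hy2 : y.2 = p := (Finset.mem_filter.mp hy).2
        exact Prod.ext hxy (hx2.trans hy2.symm)
      rw [e]; exact g3 p
    · intro k
      have e : (M.filter (fun x => I.lec x.2 = k)).card = (lecAsg I M k).card := by
        refine (Finset.card_image_of_injOn ?_).symm
        intro x hx y hy hxy
        have hx1 : x ∈ M := (Finset.mem_filter.mp hx).1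
        have hy1 : y ∈ M := (Finset.mem_filter.mp hy).1
        have : x.2 = y.2 := by
          apply g2 x.1 x.2 y.2
          · exact (Prod.mk.eta (p := x)) ▸ hx1
          · rw [hxy]; exact (Prod.mk.eta (p := y)) ▸ hy1
        exact Prod.ext hxy this
      rw [e]; exact g4 k
  · intro s p hb
    obtain ⟨hacc, hnotin, hpref, hcap⟩ := hb
    by_cases hpA : p ∈ A s
    · have hsm : ¬ ∀ q, (s, q) ∉ M := by
        intro h
        rw [ht s h] at hpA
        exact absurd hpA (Finset.notMem_empty p)
      push_neg at hsm
      obtain ⟨q, hq⟩ := hsm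
      have hqacc : q ∈ I.acc s := g1 _ hq
      obtain ⟨h1, h2⟩ := hpref q hq
      have hlt : kS I s p < kS I s q := kS_lt hacc hqacc h1 h2
      have hge : kS I s q ≤ kS I s p := (g6 s q hq).2 p hpA
      omega
    · obtain ⟨R1, R2⟩ := g7 s p hacc hpA
      have hrels : relL I (I.lec p) s := ⟨p, hacc, rfl⟩
      have hrelproj : ∀ t ∈ projAsg M p, relL I (I.lec p) t :=
        fun t ht' => ⟨p, g1 _ (mem_projAsg.mp ht'), rfl⟩
      have hrellec : ∀ t ∈ lecAsg I M (I.lec p), relL I (I.lec p) t := by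
        intro t ht'
        obtain ⟨q, hq, hlq⟩ := mem_lecAsg.mp ht'
        exact ⟨q, g1 _ hq, hlq⟩
      rcases hcap with ⟨hc1, hc2⟩ | ⟨hc1, hc2, hc3⟩ | ⟨hc1, ht3⟩
      · rcases R2 with h | ⟨h, _⟩ <;> omega
      · rcases R2 with h | ⟨hd, hall⟩
        · omega
        · rcases hc3 with hin | ⟨t, ⟨htmem, _⟩, hp1, hp2⟩
          · exact absurd (hall s hin) (lt_irrefl _)
          · have h1 : kL I (I.lec p) s < kL I (I.lec p) t :=
              kL_lt hrels (hrellec t htmem) hp1 hp2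
            have h2 := hall t htmem
            omega
      · obtain ⟨t, ⟨htmem, _⟩, hp1, hp2⟩ := ht3
        have h1 : kL I (I.lec p) s < kL I (I.lec p) t :=
          kL_lt hrels (hrelproj t htmem) hp1 hp2
        have h2 := R1 t htmem
        omega

lemma good_init (I : SPAST S P L) : Good I (∅ : Finset (S × P)) I.acc := by
  refine ⟨?_, ?_, ?_, ?_, ?_, ?_, ?_⟩
  · intro x hx; exact absurd hx (Finset.notMem_empty x)
  · intro s p q hp _; exact absurd hp (Finset.notMem_empty _)
  · intro p
    have : projAsg (∅ : Finset (S × P)) p = ∅ := by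
      ext t; rw [mem_projAsg]; simp
    rw [this]; simp
  · intro k
    have : lecAsg I (∅ : Finset (S × P)) k = ∅ := by
      ext t; rw [mem_lecAsg]; simp
    rw [this]; simp
  · intro s; exact subset_rfl
  · intro s p hp; exact absurd hp (Finset.notMem_empty _)
  · intro s p hp hnp; exact absurd hp hnp

end Aux4

open SPAST in
theorem exists_weakly_stable {S P L : Type} [Fintype S] [Fintype P] [Fintype L]
    [DecidableEq S] [DecidableEq P] [DecidableEq L]
    (I : SPAST S P L) :
    ∃ M : Finset (S × P), WeaklyStable I M := by
  obtain ⟨M, A, hg, ht⟩ :=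
    reach I (meas (∅ : Finset (S × P)) I.acc) ∅ I.acc (good_init I) le_rfl
  exact ⟨M, stable_of_terminal I M A hg ht⟩
end

section
/- Let I be an instance of SPA-ST that admits at least one super-stable matching. Then I admits a super-stable matching M* (the student-optimal super-stable matching) such that for every super-stable matching M in I and every student s that is matched in M, the student s is also matched in M* and s does not strictly prefer M(s) to M*(s); moreover, every student unmatched in M* is unmatched in every super-stable matching of I. -/
open scoped Classical

namespace SPAST

section Aux
set_option linter.unusedSectionVars false

variable {S P L : Type} [Fintype S] [Fintype P] [Fintype L]
  [DecidableEq S] [DecidableEq P] [DecidableEq L]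

variable (I : SPAST S P L)

/-- strict student preference: `p ≻_s q` -/
def sLt (s : S) (p q : P) : Prop := I.sPref s p q ∧ ¬ I.sPref s q p

/-- strict lecturer preference: `t ≻_k u` -/
def lLt (k : L) (t u : S) : Prop := I.lPref k t u ∧ ¬ I.lPref k u t

variable {I}

lemma sLt_asymm {s : S} {p q : P} (h : sLt I s p q) (h' : sLt I s q p) : False := h.2 h'.1

lemma sLt_irrefl {s : S} {p : P} (h : sLt I s p p) : False := h.2 h.1

lemma lLt_asymm {k : L} {t u : S} (h : lLt I k t u) (h' : lLt I k u t) : False := h.2 h'.1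

lemma sPref_of_not_sLt {s : S} {p q : P} (hp : p ∈ I.acc s) (hq : q ∈ I.acc s)
    (h : ¬ sLt I s p q) : I.sPref s q p := by
  rcases I.sTotal s p hp q hq with h1 | h1
  · by_contra h2; exact h ⟨h1, h2⟩
  · exact h1

lemma lPref_of_not_lLt {k : L} {t u : S} (ht : ∃ p ∈ I.acc t, I.lec p = k)
    (hu : ∃ p ∈ I.acc u, I.lec p = k) (h : ¬ lLt I k t u) : I.lPref k u t := by
  rcases I.lTotal k t u ht hu with h1 | h1
  · by_contra h2; exact h ⟨h1, h2⟩
  · exact h1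

/-- from `a ⪰ b ≻ c` conclude `a ≻ c` -/
lemma sLt_of_ge_of_gt {s : S} {a b c : P} (ha : a ∈ I.acc s) (hb : b ∈ I.acc s)
    (hc : c ∈ I.acc s) (h1 : I.sPref s a b) (h2 : sLt I s b c) : sLt I s a c := by
  refine ⟨I.sTrans s a ha b hb c hc h1 h2.1, fun hca => ?_⟩
  exact h2.2 (I.sTrans s c hc a ha b hb hca h1)

/-- from `a ≻ b ⪰ c` conclude `a ≻ c` -/
lemma sLt_of_gt_of_ge {s : S} {a b c : P} (ha : a ∈ I.acc s) (hb : b ∈ I.acc s)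
    (hc : c ∈ I.acc s) (h1 : sLt I s a b) (h2 : I.sPref s b c) : sLt I s a c := by
  refine ⟨I.sTrans s a ha b hb c hc h1.1 h2, fun hca => ?_⟩
  exact h1.2 (I.sTrans s b hb c hc a ha h2 hca)

/-- from `t ≻ u ⪰ v` conclude `t ≻ v` (lecturer side) -/
lemma lLt_of_gt_of_ge {k : L} {t u v : S} (ht : ∃ p ∈ I.acc t, I.lec p = k)
    (hu : ∃ p ∈ I.acc u, I.lec p = k) (hv : ∃ p ∈ I.acc v, I.lec p = k)
    (h1 : lLt I k t u) (h2 : I.lPref k u v) : lLt I k t v := by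
  refine ⟨I.lTrans k t u v ht hu hv h1.1 h2, fun hvt => ?_⟩
  exact h1.2 (I.lTrans k u v t hu hv ht h2 hvt)

lemma mem_projAsg {M : Finset (S × P)} {s : S} {p : P} :
    s ∈ projAsg M p ↔ (s, p) ∈ M := by
  constructor
  · intro h
    rcases Finset.mem_image.1 h with ⟨x, hx, hxs⟩
    rcases Finset.mem_filter.1 hx with ⟨hxM, hx2⟩
    have : x = (s, p) := by
      cases x; simp only [Prod.mk.injEq]; exact ⟨hxs, hx2⟩
    rwa [this] at hxM
  · intro h
    exact Finset.mem_image.2 ⟨(s, p), Finset.mem_filter.2 ⟨h, rfl⟩, rfl⟩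

lemma mem_lecAsg {M : Finset (S × P)} {s : S} {k : L} :
    s ∈ lecAsg I M k ↔ ∃ p, (s, p) ∈ M ∧ I.lec p = k := by
  constructor
  · intro h
    rcases Finset.mem_image.1 h with ⟨x, hx, hxs⟩
    rcases Finset.mem_filter.1 hx with ⟨hxM, hx2⟩
    obtain ⟨x1, x2⟩ := x
    cases hxs
    exact ⟨x2, hxM, hx2⟩
  · rintro ⟨p, hp, hk⟩
    exact Finset.mem_image.2 ⟨(s, p), Finset.mem_filter.2 ⟨hp, hk⟩, rfl⟩

lemma projAsg_subset_lecAsg {M : Finset (S × P)} {p : P} {s : S}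
    (h : s ∈ projAsg M p) : s ∈ lecAsg I M (I.lec p) :=
  (mem_lecAsg).2 ⟨p, (mem_projAsg).1 h, rfl⟩

/-- the count of pairs at a project equals the number of assigned students -/
lemma projAsg_card {M : Finset (S × P)} {p : P} :
    (projAsg M p).card = (M.filter (fun x => x.2 = p)).card := by
  apply Finset.card_image_of_injOn
  intro x hx y hy hxy
  rcases Finset.mem_filter.1 hx with ⟨_, hx2⟩
  rcases Finset.mem_filter.1 hy with ⟨_, hy2⟩
  cases x; cases y
  simp only [Prod.mk.injEq]
  exact ⟨hxy, hx2.trans hy2.symm⟩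

lemma lecAsg_card {M : Finset (S × P)} {k : L}
    (hfun : ∀ s : S, ∀ p q : P, (s, p) ∈ M → (s, q) ∈ M → p = q) :
    (lecAsg I M k).card = (M.filter (fun x => I.lec x.2 = k)).card := by
  apply Finset.card_image_of_injOn
  intro x hx y hy hxy
  rcases Finset.mem_filter.1 hx with ⟨hxM, _⟩
  rcases Finset.mem_filter.1 hy with ⟨hyM, _⟩
  cases x; cases y
  simp only [Prod.mk.injEq]
  subst hxy
  exact ⟨rfl, hfun _ _ _ hxM hyM⟩

/-- existence of a least-preferred student in a nonempty set -/
lemma exists_worst {k : L} {T : Finset S} (hne : T.Nonempty)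
    (hdom : ∀ t ∈ T, ∃ p ∈ I.acc t, I.lec p = k) : ∃ w, I.WorstIn k T w := by
  classical
  induction T using Finset.induction_on with
  | empty => exact absurd hne (by simp)
  | @insert a T ha ih =>
    rcases T.eq_empty_or_nonempty with rfl | hTne
    · refine ⟨a, Finset.mem_insert_self a _, ?_⟩
      intro t ht
      rcases Finset.mem_insert.1 ht with rfl | h
      · exact I.lRefl k t (hdom t ht)
      · simp at h
    · rcases ih hTne (fun t ht => hdom t (Finset.mem_insert_of_mem ht)) with ⟨w, hwT, hw⟩
      have hwd := hdom w (Finset.mem_insert_of_mem hwT)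
      have had := hdom a (Finset.mem_insert_self a T)
      rcases I.lTotal k a w had hwd with h1 | h1
      · refine ⟨w, Finset.mem_insert_of_mem hwT, ?_⟩
        intro t ht
        rcases Finset.mem_insert.1 ht with rfl | h
        · exact h1
        · exact hw t h
      · refine ⟨a, Finset.mem_insert_self a T, ?_⟩
        intro t ht
        rcases Finset.mem_insert.1 ht with rfl | h
        · exact I.lRefl k t had
        · exact I.lTrans k t w a (hdom t ht) hwd had (hw t h) h1

end Aux

end SPAST
namespace SPAST

section Aux2
set_option linter.unusedSectionVars false

variable {S P L : Type} [Fintype S] [Fintype P] [Fintype L]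
  [DecidableEq S] [DecidableEq P] [DecidableEq L]

variable {I : SPAST S P L}

/-- domain fact for a student assigned in a matching -/
lemma dom_of_mem {M : Finset (S × P)} (hM : I.IsMatching M) {s : S} {p : P}
    (h : (s, p) ∈ M) : ∃ q ∈ I.acc s, I.lec q = I.lec p :=
  ⟨p, hM.1 (s, p) h, rfl⟩

lemma dom_of_projAsg {M : Finset (S × P)} (hM : I.IsMatching M) {p : P} :
    ∀ t ∈ projAsg M p, ∃ q ∈ I.acc t, I.lec q = I.lec p := by
  intro t ht
  exact dom_of_mem hM (mem_projAsg.1 ht)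

lemma dom_of_lecAsg {M : Finset (S × P)} (hM : I.IsMatching M) {k : L} :
    ∀ t ∈ lecAsg I M k, ∃ q ∈ I.acc t, I.lec q = k := by
  intro t ht
  rcases (mem_lecAsg).1 ht with ⟨q, hq, hk⟩
  exact ⟨q, hM.1 (t, q) hq, hk⟩

/-- The central extraction lemma: if `M` is super-stable, `p` is acceptable to `s`,
`(s,p) ∉ M` and `s` does not strictly prefer her `M`-assignment (if any) to `p`,
then either `p` is full in `M` and all its occupants are strictly preferred to `s`,
or `p` is undersubscribed, `lec p` is full, `s` is not assigned to `lec p`, and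
all students of `lec p` are strictly preferred to `s`. -/
lemma fact_of_not_blocking {M : Finset (S × P)} (hM : SuperStable I M)
    {s : S} {p : P} (hacc : p ∈ I.acc s) (hnot : (s, p) ∉ M)
    (ha : ∀ q, (s, q) ∈ M → ¬ sLt I s q p) :
    ((projAsg M p).card = I.c p ∧ ∀ t ∈ projAsg M p, lLt I (I.lec p) t s) ∨
    ((projAsg M p).card < I.c p ∧ (lecAsg I M (I.lec p)).card = I.d (I.lec p) ∧
      s ∉ lecAsg I M (I.lec p) ∧ ∀ t ∈ lecAsg I M (I.lec p), lLt I (I.lec p) t s) := by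
  have hsdom : ∃ q ∈ I.acc s, I.lec q = I.lec p := ⟨p, hacc, rfl⟩
  have hblock := hM.2 s p
  have hpc : (projAsg M p).card ≤ I.c p := by
    rw [projAsg_card]; exact hM.1.2.2.1 p
  have hlc : (lecAsg I M (I.lec p)).card ≤ I.d (I.lec p) := by
    rw [lecAsg_card hM.1.2.1]; exact hM.1.2.2.2 (I.lec p)
  have ha' : ∀ q : P, (s, q) ∈ M → ¬(I.sPref s q p ∧ ¬I.sPref s p q) := ha
  rcases eq_or_lt_of_le hpc with hfull | hlt
  · -- project full
    left
    refine ⟨hfull, ?_⟩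
    intro t ht
    by_contra hns
    -- then s is weakly preferred to t, hence to the worst student, giving a blocking pair
    have hst : I.lPref (I.lec p) s t :=
      lPref_of_not_lLt (dom_of_projAsg hM.1 t ht) hsdom hns
    have hne : (projAsg M p).Nonempty := by
      rw [← Finset.card_pos, hfull]; exact I.cpos p
    rcases exists_worst hne (dom_of_projAsg hM.1) with ⟨w, hwmem, hw⟩
    have hsw : I.lPref (I.lec p) s w :=
      I.lTrans (I.lec p) s t w hsdom (dom_of_projAsg hM.1 t ht)
        (dom_of_projAsg hM.1 w hwmem) hst (hw t ht)
    exact hblock ⟨hacc, hnot, ha', Or.inr (Or.inr ⟨hfull, w, ⟨hwmem, hw⟩, hsw⟩)⟩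
  · rcases eq_or_lt_of_le hlc with hkfull | hklt
    · by_cases hsin : s ∈ lecAsg I M (I.lec p)
      · exact absurd ⟨hacc, hnot, ha', Or.inr (Or.inl ⟨hlt, hkfull, Or.inl hsin⟩)⟩ hblock
      · right
        refine ⟨hlt, hkfull, hsin, ?_⟩
        intro t ht
        by_contra hns
        have hst : I.lPref (I.lec p) s t :=
          lPref_of_not_lLt (dom_of_lecAsg hM.1 t ht) hsdom hns
        have hne : (lecAsg I M (I.lec p)).Nonempty := by
          rw [← Finset.card_pos, hkfull]; exact I.dpos (I.lec p)
        rcases exists_worst hne (dom_of_lecAsg hM.1) with ⟨w, hwmem, hw⟩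
        have hsw : I.lPref (I.lec p) s w :=
          I.lTrans (I.lec p) s t w hsdom (dom_of_lecAsg hM.1 t ht)
            (dom_of_lecAsg hM.1 w hwmem) hst (hw t ht)
        exact hblock ⟨hacc, hnot, ha',
          Or.inr (Or.inl ⟨hlt, hkfull, Or.inr ⟨w, ⟨hwmem, hw⟩, hsw⟩⟩)⟩
    · exact absurd ⟨hacc, hnot, ha', Or.inl ⟨hlt, hklt⟩⟩ hblock

variable (I)

/-- the join of two matchings: each student takes the better of her two assignments,
preferring the `M1`-assignment in case of ties -/
noncomputable def jn (M1 M2 : Finset (S × P)) : Finset (S × P) :=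
  (M1.filter (fun x => ∀ q, (x.1, q) ∈ M2 → ¬ sLt I x.1 q x.2)) ∪
  (M2.filter (fun x => ∀ q, (x.1, q) ∈ M1 → sLt I x.1 x.2 q))

variable {I}

lemma jn_sub {M1 M2 : Finset (S × P)} {x : S × P} (h : x ∈ jn I M1 M2) :
    x ∈ M1 ∨ x ∈ M2 := by
  rcases Finset.mem_union.1 h with h | h
  · exact Or.inl (Finset.mem_filter.1 h).1
  · exact Or.inr (Finset.mem_filter.1 h).1

/-- choice condition against `M1` -/
lemma jn_choice1 {M1 M2 : Finset (S × P)} {s : S} {q r : P}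
    (hq : (s, q) ∈ jn I M1 M2) (hr : (s, r) ∈ M1)
    (hfun1 : ∀ s : S, ∀ p q : P, (s, p) ∈ M1 → (s, q) ∈ M1 → p = q) :
    q = r ∨ ((s, q) ∈ M2 ∧ sLt I s q r) := by
  rcases Finset.mem_union.1 hq with h | h
  · rcases Finset.mem_filter.1 h with ⟨h1, _⟩
    exact Or.inl (hfun1 s q r h1 hr)
  · rcases Finset.mem_filter.1 h with ⟨h1, h2⟩
    exact Or.inr ⟨h1, h2 r hr⟩

/-- choice condition against `M2` -/
lemma jn_choice2 {M1 M2 : Finset (S × P)} {s : S} {q r : P}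
    (hq : (s, q) ∈ jn I M1 M2) (hr : (s, r) ∈ M2)
    (hfun2 : ∀ s : S, ∀ p q : P, (s, p) ∈ M2 → (s, q) ∈ M2 → p = q) :
    q = r ∨ ((s, q) ∈ M1 ∧ ¬ sLt I s r q) := by
  rcases Finset.mem_union.1 hq with h | h
  · rcases Finset.mem_filter.1 h with ⟨h1, h2⟩
    exact Or.inr ⟨h1, h2 r hr⟩
  · rcases Finset.mem_filter.1 h with ⟨h1, _⟩
    exact Or.inl (hfun2 s q r h1 hr)

/-- a student matched in `M1` is matched in the join -/
lemma jn_matched1 {M1 M2 : Finset (S × P)} {s : S} {p : P} (hp : (s, p) ∈ M1)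
    (hfun1 : ∀ s : S, ∀ p q : P, (s, p) ∈ M1 → (s, q) ∈ M1 → p = q) :
    ∃ q, (s, q) ∈ jn I M1 M2 := by
  by_cases hx : ∃ q, (s, q) ∈ M2 ∧ sLt I s q p
  · rcases hx with ⟨q, hq, hlt⟩
    refine ⟨q, Finset.mem_union.2 (Or.inr (Finset.mem_filter.2 ⟨hq, ?_⟩))⟩
    intro r hr
    have : r = p := hfun1 s r p hr hp
    rwa [this]
  · refine ⟨p, Finset.mem_union.2 (Or.inl (Finset.mem_filter.2 ⟨hp, ?_⟩))⟩
    intro q hq hlt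
    exact hx ⟨q, hq, hlt⟩

/-- a student matched in `M2` is matched in the join -/
lemma jn_matched2 {M1 M2 : Finset (S × P)} {s : S} {p : P} (hp : (s, p) ∈ M2)
    (hfun1 : ∀ s : S, ∀ p q : P, (s, p) ∈ M1 → (s, q) ∈ M1 → p = q) :
    ∃ q, (s, q) ∈ jn I M1 M2 := by
  by_cases hm1 : ∃ r, (s, r) ∈ M1
  · rcases hm1 with ⟨r, hr⟩
    exact jn_matched1 hr hfun1
  · refine ⟨p, Finset.mem_union.2 (Or.inr (Finset.mem_filter.2 ⟨hp, ?_⟩))⟩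
    intro q hq
    exact absurd ⟨q, hq⟩ hm1

/-- the join assigns each student at most one project -/
lemma jn_fun {M1 M2 : Finset (S × P)}
    (hfun1 : ∀ s : S, ∀ p q : P, (s, p) ∈ M1 → (s, q) ∈ M1 → p = q)
    (hfun2 : ∀ s : S, ∀ p q : P, (s, p) ∈ M2 → (s, q) ∈ M2 → p = q) :
    ∀ s : S, ∀ p q : P, (s, p) ∈ jn I M1 M2 → (s, q) ∈ jn I M1 M2 → p = q := by
  intro s p q hp hq
  rcases Finset.mem_union.1 hp with h1 | h1 <;> rcases Finset.mem_union.1 hq with h2 | h2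
  · exact hfun1 s p q (Finset.mem_filter.1 h1).1 (Finset.mem_filter.1 h2).1
  · rcases Finset.mem_filter.1 h1 with ⟨hm1, hk1⟩
    rcases Finset.mem_filter.1 h2 with ⟨hm2, hk2⟩
    exact absurd (hk2 p hm1) (fun hlt => (hk1 q hm2) hlt)
  · rcases Finset.mem_filter.1 h1 with ⟨hm1, hk1⟩
    rcases Finset.mem_filter.1 h2 with ⟨hm2, hk2⟩
    exact absurd (hk1 q hm2) (fun hlt => (hk2 p hm1) hlt)
  · exact hfun2 s p q (Finset.mem_filter.1 h1).1 (Finset.mem_filter.1 h2).1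

end Aux2

end SPAST
namespace SPAST

section Aux3
set_option linter.unusedSectionVars false

variable {S P L : Type} [Fintype S] [Fintype P] [Fintype L]
  [DecidableEq S] [DecidableEq P] [DecidableEq L]

variable (I : SPAST S P L)

/-- number of pairs of `M` at project `p` -/
noncomputable def pcnt (M : Finset (S × P)) (p : P) : ℕ :=
  (M.filter (fun x => x.2 = p)).card

/-- number of pairs of `M` at lecturer `k` -/
noncomputable def lcnt (M : Finset (S × P)) (k : L) : ℕ :=
  (M.filter (fun x => I.lec x.2 = k)).card

variable {I}

lemma pcnt_eq_projAsg (M : Finset (S × P)) (p : P) :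
    pcnt M p = (projAsg M p).card := (projAsg_card).symm

lemma lcnt_eq_lecAsg {M : Finset (S × P)} (k : L)
    (hfun : ∀ s : S, ∀ p q : P, (s, p) ∈ M → (s, q) ∈ M → p = q) :
    lcnt I M k = (lecAsg I M k).card := (lecAsg_card hfun).symm

lemma lcnt_eq_sum (M : Finset (S × P)) (k : L) :
    lcnt I M k = ∑ p ∈ Finset.univ.filter (fun p => I.lec p = k), pcnt M p := by
  rw [lcnt, Finset.card_eq_sum_card_fiberwise
    (f := fun x : S × P => x.2) (t := Finset.univ.filter (fun p => I.lec p = k))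
    (fun x hx => Finset.mem_filter.2 ⟨Finset.mem_univ _, (Finset.mem_filter.1 hx).2⟩)]
  apply Finset.sum_congr rfl
  intro p hp
  rcases Finset.mem_filter.1 hp with ⟨-, hk⟩
  rw [pcnt]
  congr 1
  ext x
  simp only [Finset.mem_filter]
  constructor
  · rintro ⟨⟨hx, -⟩, h2⟩; exact ⟨hx, h2⟩
  · rintro ⟨hx, h2⟩; exact ⟨⟨hx, by rw [h2]; exact hk⟩, h2⟩

lemma card_eq_sum_lcnt (M : Finset (S × P)) :
    M.card = ∑ k ∈ Finset.univ, lcnt I M k := by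
  rw [Finset.card_eq_sum_card_fiberwise
    (f := fun x : S × P => I.lec x.2) (t := Finset.univ) (fun x _ => Finset.mem_univ _)]
  rfl

/-- sums equal and pointwise `≤` give pointwise equality -/
lemma eq_of_sum_eq_of_le {α : Type*} {t : Finset α} {f g : α → ℕ}
    (hle : ∀ a ∈ t, f a ≤ g a) (hsum : ∑ a ∈ t, f a = ∑ a ∈ t, g a) :
    ∀ a ∈ t, f a = g a := by
  intro a ha
  by_contra hne
  have hlt : f a < g a := lt_of_le_of_ne (hle a ha) hne
  exact absurd hsum (ne_of_lt (Finset.sum_lt_sum hle ⟨a, ha, hlt⟩))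

/-- extraction of an "entrant" pair at a project -/
lemma exists_entrant {J M' : Finset (S × P)} {p : P}
    (h : pcnt M' p < pcnt J p) : ∃ s, (s, p) ∈ J ∧ (s, p) ∉ M' := by
  have hns : ¬ (J.filter (fun x => x.2 = p)) ⊆ (M'.filter (fun x => x.2 = p)) := by
    intro hsub
    exact absurd (Finset.card_le_card hsub) (not_le.2 h)
  rcases Finset.not_subset.1 hns with ⟨x, hxJ, hxM⟩
  rcases Finset.mem_filter.1 hxJ with ⟨hx1, hx2⟩
  obtain ⟨s, q⟩ := x
  cases hx2
  refine ⟨s, hx1, fun hc => hxM (Finset.mem_filter.2 ⟨hc, rfl⟩)⟩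

/-- from the facts, all students of the project (in the old matching) beat `s` -/
lemma fact_all_proj {M : Finset (S × P)} {s : S} {p : P}
    (hf : ((projAsg M p).card = I.c p ∧ ∀ t ∈ projAsg M p, lLt I (I.lec p) t s) ∨
      ((projAsg M p).card < I.c p ∧ (lecAsg I M (I.lec p)).card = I.d (I.lec p) ∧
        s ∉ lecAsg I M (I.lec p) ∧ ∀ t ∈ lecAsg I M (I.lec p), lLt I (I.lec p) t s)) :
    ∀ t ∈ projAsg M p, lLt I (I.lec p) t s := by
  rcases hf with ⟨-, h⟩ | ⟨-, -, -, h⟩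
  · exact h
  · exact fun t ht => h t (projAsg_subset_lecAsg ht)

section Join

variable {M1 M2 : Finset (S × P)} (h1 : SuperStable I M1) (h2 : SuperStable I M2)

include h1 h2

/-- facts about a join pair coming from `M2` but not in `M1` -/
lemma jn_fact1 {s : S} {p : P} (hJ : (s, p) ∈ jn I M1 M2) (hm2 : (s, p) ∈ M2)
    (hm1 : (s, p) ∉ M1) :
    ((projAsg M1 p).card = I.c p ∧ ∀ t ∈ projAsg M1 p, lLt I (I.lec p) t s) ∨
    ((projAsg M1 p).card < I.c p ∧ (lecAsg I M1 (I.lec p)).card = I.d (I.lec p) ∧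
      s ∉ lecAsg I M1 (I.lec p) ∧ ∀ t ∈ lecAsg I M1 (I.lec p), lLt I (I.lec p) t s) := by
  have hacc : p ∈ I.acc s := h2.1.1 (s, p) hm2
  have ha : ∀ q, (s, q) ∈ M1 → ¬ sLt I s q p := by
    rcases Finset.mem_union.1 hJ with h | h
    · exact absurd (Finset.mem_filter.1 h).1 hm1
    · intro q hq hlt
      exact ((Finset.mem_filter.1 h).2 q hq).2 hlt.1
  exact fact_of_not_blocking h1 hacc hm1 ha

/-- facts about a join pair coming from `M1` but not in `M2` -/
lemma jn_fact2 {s : S} {p : P} (hJ : (s, p) ∈ jn I M1 M2) (hm1 : (s, p) ∈ M1)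
    (hm2 : (s, p) ∉ M2) :
    ((projAsg M2 p).card = I.c p ∧ ∀ t ∈ projAsg M2 p, lLt I (I.lec p) t s) ∨
    ((projAsg M2 p).card < I.c p ∧ (lecAsg I M2 (I.lec p)).card = I.d (I.lec p) ∧
      s ∉ lecAsg I M2 (I.lec p) ∧ ∀ t ∈ lecAsg I M2 (I.lec p), lLt I (I.lec p) t s) := by
  have hacc : p ∈ I.acc s := h1.1.1 (s, p) hm1
  have ha : ∀ q, (s, q) ∈ M2 → ¬ sLt I s q p := by
    rcases Finset.mem_union.1 hJ with h | h
    · exact (Finset.mem_filter.1 h).2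
    · exact absurd (Finset.mem_filter.1 h).1 hm2
  exact fact_of_not_blocking h2 hacc hm2 ha

/-- Goal 1: the join respects project capacities. -/
lemma jn_pcnt_le (p : P) : pcnt (jn I M1 M2) p ≤ I.c p := by
  by_contra hc
  push_neg at hc
  have hm1le : pcnt M1 p ≤ I.c p := h1.1.2.2.1 p
  have hm2le : pcnt M2 p ≤ I.c p := h2.1.2.2.1 p
  rcases exists_entrant (lt_of_le_of_lt hm1le hc) with ⟨sx, hxJ, hxM1⟩
  rcases exists_entrant (lt_of_le_of_lt hm2le hc) with ⟨sy, hyJ, hyM2⟩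
  have hxm2 : (sx, p) ∈ M2 := (jn_sub hxJ).resolve_left hxM1
  have hym1 : (sy, p) ∈ M1 := (jn_sub hyJ).resolve_right hyM2
  have hx := fact_all_proj (jn_fact1 h1 h2 hxJ hxm2 hxM1)
  have hy := fact_all_proj (jn_fact2 h1 h2 hyJ hym1 hyM2)
  exact lLt_asymm (hx sy (mem_projAsg.2 hym1)) (hy sx (mem_projAsg.2 hxm2))

/-- an excess at a project relative to `M1` yields an entrant rejected by the
full lecturer in `M1` -/
lemma jn_excess1 {pa : P} {k : L} (hk : I.lec pa = k)
    (h : pcnt M1 pa < pcnt (jn I M1 M2) pa) :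
    ∃ x, x ∈ lecAsg I M2 k ∧ x ∉ lecAsg I M1 k ∧
      (lecAsg I M1 k).card = I.d k ∧ ∀ t ∈ lecAsg I M1 k, lLt I k t x := by
  rcases exists_entrant h with ⟨sx, hxJ, hxM1⟩
  have hxm2 : (sx, pa) ∈ M2 := (jn_sub hxJ).resolve_left hxM1
  rcases jn_fact1 h1 h2 hxJ hxm2 hxM1 with ⟨hfull, -⟩ | ⟨-, hkfull, hnot, hall⟩
  · exfalso
    have : pcnt (jn I M1 M2) pa ≤ I.c pa := jn_pcnt_le h1 h2 pa
    rw [pcnt_eq_projAsg M1 pa, hfull] at h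
    exact absurd this (not_le.2 h)
  · subst hk
    exact ⟨sx, mem_lecAsg.2 ⟨pa, hxm2, rfl⟩, hnot, hkfull, hall⟩

lemma jn_excess2 {pb : P} {k : L} (hk : I.lec pb = k)
    (h : pcnt M2 pb < pcnt (jn I M1 M2) pb) :
    ∃ y, y ∈ lecAsg I M1 k ∧ y ∉ lecAsg I M2 k ∧
      (lecAsg I M2 k).card = I.d k ∧ ∀ t ∈ lecAsg I M2 k, lLt I k t y := by
  rcases exists_entrant h with ⟨sy, hyJ, hyM2⟩
  have hym1 : (sy, pb) ∈ M1 := (jn_sub hyJ).resolve_right hyM2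
  rcases jn_fact2 h1 h2 hyJ hym1 hyM2 with ⟨hfull, -⟩ | ⟨-, hkfull, hnot, hall⟩
  · exfalso
    have : pcnt (jn I M1 M2) pb ≤ I.c pb := jn_pcnt_le h1 h2 pb
    rw [pcnt_eq_projAsg M2 pb, hfull] at h
    exact absurd this (not_le.2 h)
  · subst hk
    exact ⟨sy, mem_lecAsg.2 ⟨pb, hym1, rfl⟩, hnot, hkfull, hall⟩

/-- the crossing principle: a lecturer cannot have excesses relative to both
`M1` and `M2` -/
lemma jn_cp {pa pb : P} {k : L} (hka : I.lec pa = k) (hkb : I.lec pb = k)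
    (ha : pcnt M1 pa < pcnt (jn I M1 M2) pa)
    (hb : pcnt M2 pb < pcnt (jn I M1 M2) pb) : False := by
  rcases jn_excess1 h1 h2 hka ha with ⟨x, hx2, -, -, hxall⟩
  rcases jn_excess2 h1 h2 hkb hb with ⟨y, hy1, -, -, hyall⟩
  exact lLt_asymm (hxall y hy1) (hyall x hx2)

/-- the join respects lecturer capacities -/
lemma jn_lcnt_le_d (k : L) : lcnt I (jn I M1 M2) k ≤ I.d k := by
  by_cases hA : ∀ p, I.lec p = k → pcnt (jn I M1 M2) p ≤ pcnt M1 p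
  · calc lcnt I (jn I M1 M2) k
        = ∑ p ∈ Finset.univ.filter (fun p => I.lec p = k), pcnt (jn I M1 M2) p :=
          lcnt_eq_sum _ k
      _ ≤ ∑ p ∈ Finset.univ.filter (fun p => I.lec p = k), pcnt M1 p :=
          Finset.sum_le_sum (fun p hp => hA p (Finset.mem_filter.1 hp).2)
      _ = lcnt I M1 k := (lcnt_eq_sum _ k).symm
      _ ≤ I.d k := h1.1.2.2.2 k
  · push_neg at hA
    rcases hA with ⟨pa, hka, hpa⟩
    have hB : ∀ p, I.lec p = k → pcnt (jn I M1 M2) p ≤ pcnt M2 p := by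
      intro p hp
      by_contra hc
      exact jn_cp h1 h2 hka hp hpa (not_le.1 hc)
    calc lcnt I (jn I M1 M2) k
        = ∑ p ∈ Finset.univ.filter (fun p => I.lec p = k), pcnt (jn I M1 M2) p :=
          lcnt_eq_sum _ k
      _ ≤ ∑ p ∈ Finset.univ.filter (fun p => I.lec p = k), pcnt M2 p :=
          Finset.sum_le_sum (fun p hp => hB p (Finset.mem_filter.1 hp).2)
      _ = lcnt I M2 k := (lcnt_eq_sum _ k).symm
      _ ≤ I.d k := h2.1.2.2.2 k

/-- Lemma H: per-lecturer counts of the join are at most those of `M1` -/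
lemma jn_lcnt_le1 (k : L) : lcnt I (jn I M1 M2) k ≤ lcnt I M1 k := by
  by_cases hA : ∀ p, I.lec p = k → pcnt (jn I M1 M2) p ≤ pcnt M1 p
  · calc lcnt I (jn I M1 M2) k
        = ∑ p ∈ Finset.univ.filter (fun p => I.lec p = k), pcnt (jn I M1 M2) p :=
          lcnt_eq_sum _ k
      _ ≤ ∑ p ∈ Finset.univ.filter (fun p => I.lec p = k), pcnt M1 p :=
          Finset.sum_le_sum (fun p hp => hA p (Finset.mem_filter.1 hp).2)
      _ = lcnt I M1 k := (lcnt_eq_sum _ k).symm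
  · push_neg at hA
    rcases hA with ⟨pa, hka, hpa⟩
    rcases jn_excess1 h1 h2 hka hpa with ⟨x, -, -, hkfull, -⟩
    calc lcnt I (jn I M1 M2) k ≤ I.d k := jn_lcnt_le_d h1 h2 k
      _ = (lecAsg I M1 k).card := hkfull.symm
      _ = lcnt I M1 k := (lcnt_eq_lecAsg k h1.1.2.1).symm

lemma jn_lcnt_le2 (k : L) : lcnt I (jn I M1 M2) k ≤ lcnt I M2 k := by
  by_cases hA : ∀ p, I.lec p = k → pcnt (jn I M1 M2) p ≤ pcnt M2 p
  · calc lcnt I (jn I M1 M2) k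
        = ∑ p ∈ Finset.univ.filter (fun p => I.lec p = k), pcnt (jn I M1 M2) p :=
          lcnt_eq_sum _ k
      _ ≤ ∑ p ∈ Finset.univ.filter (fun p => I.lec p = k), pcnt M2 p :=
          Finset.sum_le_sum (fun p hp => hA p (Finset.mem_filter.1 hp).2)
      _ = lcnt I M2 k := (lcnt_eq_sum _ k).symm
  · push_neg at hA
    rcases hA with ⟨pb, hkb, hpb⟩
    rcases jn_excess2 h1 h2 hkb hpb with ⟨y, -, -, hkfull, -⟩
    calc lcnt I (jn I M1 M2) k ≤ I.d k := jn_lcnt_le_d h1 h2 k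
      _ = (lecAsg I M2 k).card := hkfull.symm
      _ = lcnt I M2 k := (lcnt_eq_lecAsg k h2.1.2.1).symm

end Join

end Aux3

end SPAST
namespace SPAST

section Aux4
set_option linter.unusedSectionVars false

variable {S P L : Type} [Fintype S] [Fintype P] [Fintype L]
  [DecidableEq S] [DecidableEq P] [DecidableEq L]

variable {I : SPAST S P L}
variable {M1 M2 : Finset (S × P)} (h1 : SuperStable I M1) (h2 : SuperStable I M2)

include h1 h2

lemma jn_acc : ∀ x ∈ jn I M1 M2, x.2 ∈ I.acc x.1 := by
  intro x hx
  rcases jn_sub hx with h | h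
  · exact h1.1.1 x h
  · exact h2.1.1 x h

lemma jn_card_ge1 : M1.card ≤ (jn I M1 M2).card := by
  have e1 : (M1.image Prod.fst).card = M1.card := by
    apply Finset.card_image_of_injOn
    intro x hx y hy hxy
    obtain ⟨x1, x2⟩ := x; obtain ⟨y1, y2⟩ := y
    simp only at hxy
    subst hxy
    exact Prod.ext_iff.mpr ⟨rfl, h1.1.2.1 x1 x2 y2 hx hy⟩
  have hsub : M1.image Prod.fst ⊆ (jn I M1 M2).image Prod.fst := by
    intro s hs
    rcases Finset.mem_image.1 hs with ⟨x, hx, rfl⟩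
    obtain ⟨x1, x2⟩ := x
    rcases jn_matched1 (I := I) (M2 := M2) hx h1.1.2.1 with ⟨q, hq⟩
    exact Finset.mem_image.2 ⟨(x1, q), hq, rfl⟩
  calc M1.card = (M1.image Prod.fst).card := e1.symm
    _ ≤ ((jn I M1 M2).image Prod.fst).card := Finset.card_le_card hsub
    _ ≤ (jn I M1 M2).card := Finset.card_image_le

lemma jn_card_ge2 : M2.card ≤ (jn I M1 M2).card := by
  have e1 : (M2.image Prod.fst).card = M2.card := by
    apply Finset.card_image_of_injOn
    intro x hx y hy hxy
    obtain ⟨x1, x2⟩ := x; obtain ⟨y1, y2⟩ := y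
    simp only at hxy
    subst hxy
    exact Prod.ext_iff.mpr ⟨rfl, h2.1.2.1 x1 x2 y2 hx hy⟩
  have hsub : M2.image Prod.fst ⊆ (jn I M1 M2).image Prod.fst := by
    intro s hs
    rcases Finset.mem_image.1 hs with ⟨x, hx, rfl⟩
    obtain ⟨x1, x2⟩ := x
    rcases jn_matched2 (I := I) (M1 := M1) hx h1.1.2.1 with ⟨q, hq⟩
    exact Finset.mem_image.2 ⟨(x1, q), hq, rfl⟩
  calc M2.card = (M2.image Prod.fst).card := e1.symm
    _ ≤ ((jn I M1 M2).image Prod.fst).card := Finset.card_le_card hsub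
    _ ≤ (jn I M1 M2).card := Finset.card_image_le

/-- per-lecturer counts of the join agree with those of `M1` -/
lemma jn_lcnt_eq1 : ∀ k, lcnt I (jn I M1 M2) k = lcnt I M1 k := by
  have hle : ∀ k ∈ (Finset.univ : Finset L), lcnt I (jn I M1 M2) k ≤ lcnt I M1 k :=
    fun k _ => jn_lcnt_le1 h1 h2 k
  have hsum : ∑ k ∈ Finset.univ, lcnt I (jn I M1 M2) k = ∑ k ∈ Finset.univ, lcnt I M1 k := by
    refine le_antisymm (Finset.sum_le_sum hle) ?_
    rw [← card_eq_sum_lcnt, ← card_eq_sum_lcnt]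
    exact jn_card_ge1 h1 h2
  intro k
  exact eq_of_sum_eq_of_le hle hsum k (Finset.mem_univ k)

lemma jn_lcnt_eq2 : ∀ k, lcnt I (jn I M1 M2) k = lcnt I M2 k := by
  have hle : ∀ k ∈ (Finset.univ : Finset L), lcnt I (jn I M1 M2) k ≤ lcnt I M2 k :=
    fun k _ => jn_lcnt_le2 h1 h2 k
  have hsum : ∑ k ∈ Finset.univ, lcnt I (jn I M1 M2) k = ∑ k ∈ Finset.univ, lcnt I M2 k := by
    refine le_antisymm (Finset.sum_le_sum hle) ?_
    rw [← card_eq_sum_lcnt, ← card_eq_sum_lcnt]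
    exact jn_card_ge2 h1 h2
  intro k
  exact eq_of_sum_eq_of_le hle hsum k (Finset.mem_univ k)

/-- the K-dichotomy: at each lecturer, the join's project counts agree with `M1`'s
everywhere or with `M2`'s everywhere -/
lemma jn_K (k : L) :
    (∀ p, I.lec p = k → pcnt (jn I M1 M2) p = pcnt M1 p) ∨
    (∀ p, I.lec p = k → pcnt (jn I M1 M2) p = pcnt M2 p) := by
  by_cases hA : ∀ p, I.lec p = k → pcnt (jn I M1 M2) p ≤ pcnt M1 p
  · left
    have hsum : ∑ p ∈ Finset.univ.filter (fun p => I.lec p = k), pcnt (jn I M1 M2) p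
        = ∑ p ∈ Finset.univ.filter (fun p => I.lec p = k), pcnt M1 p := by
      rw [← lcnt_eq_sum, ← lcnt_eq_sum]
      exact jn_lcnt_eq1 h1 h2 k
    intro p hp
    exact eq_of_sum_eq_of_le (fun q hq => hA q (Finset.mem_filter.1 hq).2) hsum p
      (Finset.mem_filter.2 ⟨Finset.mem_univ _, hp⟩)
  · push_neg at hA
    rcases hA with ⟨pa, hka, hpa⟩
    right
    have hB : ∀ p, I.lec p = k → pcnt (jn I M1 M2) p ≤ pcnt M2 p := by
      intro p hp
      by_contra hc
      exact jn_cp h1 h2 hka hp hpa (not_le.1 hc)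
    have hsum : ∑ p ∈ Finset.univ.filter (fun p => I.lec p = k), pcnt (jn I M1 M2) p
        = ∑ p ∈ Finset.univ.filter (fun p => I.lec p = k), pcnt M2 p := by
      rw [← lcnt_eq_sum, ← lcnt_eq_sum]
      exact jn_lcnt_eq2 h1 h2 k
    intro p hp
    exact eq_of_sum_eq_of_le (fun q hq => hB q (Finset.mem_filter.1 hq).2) hsum p
      (Finset.mem_filter.2 ⟨Finset.mem_univ _, hp⟩)

/-- a deficit at one project of a lecturer (relative to `M2`) forces an excess at
another project of the same lecturer, yielding a rejected `M1`-side witness -/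
lemma jn_deficit_witness2 {p : P} {k : L} (hk : I.lec p = k)
    (hlt : pcnt (jn I M1 M2) p < pcnt M2 p) :
    ∃ y, y ∈ lecAsg I M1 k ∧ y ∉ lecAsg I M2 k ∧ ∀ t ∈ lecAsg I M2 k, lLt I k t y := by
  have hex : ∃ p'', I.lec p'' = k ∧ pcnt M2 p'' < pcnt (jn I M1 M2) p'' := by
    by_contra hno
    push_neg at hno
    have hle : ∀ q ∈ Finset.univ.filter (fun q => I.lec q = k),
        pcnt (jn I M1 M2) q ≤ pcnt M2 q :=
      fun q hq => hno q (Finset.mem_filter.1 hq).2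
    have hstrict : ∑ q ∈ Finset.univ.filter (fun q => I.lec q = k), pcnt (jn I M1 M2) q
        < ∑ q ∈ Finset.univ.filter (fun q => I.lec q = k), pcnt M2 q :=
      Finset.sum_lt_sum hle ⟨p, Finset.mem_filter.2 ⟨Finset.mem_univ _, hk⟩, hlt⟩
    rw [← lcnt_eq_sum, ← lcnt_eq_sum] at hstrict
    exact absurd (jn_lcnt_eq2 h1 h2 k) (ne_of_lt hstrict)
  rcases hex with ⟨p'', hk'', hex''⟩
  rcases jn_excess2 h1 h2 hk'' hex'' with ⟨y, hy1, hy2, -, hall⟩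
  exact ⟨y, hy1, hy2, hall⟩

lemma jn_deficit_witness1 {p : P} {k : L} (hk : I.lec p = k)
    (hlt : pcnt (jn I M1 M2) p < pcnt M1 p) :
    ∃ x, x ∈ lecAsg I M2 k ∧ x ∉ lecAsg I M1 k ∧ ∀ t ∈ lecAsg I M1 k, lLt I k t x := by
  have hex : ∃ p'', I.lec p'' = k ∧ pcnt M1 p'' < pcnt (jn I M1 M2) p'' := by
    by_contra hno
    push_neg at hno
    have hle : ∀ q ∈ Finset.univ.filter (fun q => I.lec q = k),
        pcnt (jn I M1 M2) q ≤ pcnt M1 q :=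
      fun q hq => hno q (Finset.mem_filter.1 hq).2
    have hstrict : ∑ q ∈ Finset.univ.filter (fun q => I.lec q = k), pcnt (jn I M1 M2) q
        < ∑ q ∈ Finset.univ.filter (fun q => I.lec q = k), pcnt M1 q :=
      Finset.sum_lt_sum hle ⟨p, Finset.mem_filter.2 ⟨Finset.mem_univ _, hk⟩, hlt⟩
    rw [← lcnt_eq_sum, ← lcnt_eq_sum] at hstrict
    exact absurd (jn_lcnt_eq1 h1 h2 k) (ne_of_lt hstrict)
  rcases hex with ⟨p'', hk'', hex''⟩
  rcases jn_excess1 h1 h2 hk'' hex'' with ⟨x, hx1, hx2, -, hall⟩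
  exact ⟨x, hx1, hx2, hall⟩

/-- the join is a matching -/
lemma jn_matching : I.IsMatching (jn I M1 M2) := by
  refine ⟨jn_acc h1 h2, jn_fun h1.1.2.1 h2.1.2.1, ?_, ?_⟩
  · intro p
    exact jn_pcnt_le h1 h2 p
  · intro k
    exact jn_lcnt_le_d h1 h2 k

end Aux4

end SPAST
namespace SPAST

section Aux5
set_option linter.unusedSectionVars false

variable {S P L : Type} [Fintype S] [Fintype P] [Fintype L]
  [DecidableEq S] [DecidableEq P] [DecidableEq L]

variable {I : SPAST S P L}
variable {M1 M2 : Finset (S × P)} (h1 : SuperStable I M1) (h2 : SuperStable I M2)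

include h1 h2

/-- The join of two super-stable matchings is super-stable. -/
theorem jn_superstable : SuperStable I (jn I M1 M2) := by
  have hfun1 := h1.1.2.1
  have hfun2 := h2.1.2.1
  have hfunJ := jn_fun (I := I) hfun1 hfun2
  refine ⟨jn_matching h1 h2, ?_⟩
  intro s p hb
  obtain ⟨hacc, hnotJ, ha, hcases⟩ := hb
  -- step A : (s,p) ∉ M1
  have hm1 : (s, p) ∉ M1 := by
    intro hm1
    obtain ⟨qJ, hqJ⟩ := jn_matched1 (I := I) (M2 := M2) hm1 hfun1
    rcases jn_choice1 hqJ hm1 hfun1 with rfl | ⟨hqm2, hlt⟩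
    · exact hnotJ hqJ
    · exact ha qJ hqJ hlt
  -- step B : (s,p) ∉ M2
  have hm2 : (s, p) ∉ M2 := by
    intro hm2
    obtain ⟨qJ, hqJ⟩ := jn_matched2 (I := I) (M1 := M1) hm2 hfun1
    rcases jn_choice2 hqJ hm2 hfun2 with rfl | ⟨hqm1, hnlt⟩
    · exact hnotJ hqJ
    · -- Lemma A configuration: r := qJ is the M1-partner, tied with p
      have ha1 : ∀ q, (s, q) ∈ M1 → ¬ sLt I s q p := by
        intro q hq
        rw [show q = qJ from hfun1 s q qJ hq hqm1]
        exact ha qJ hqJ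
      have hF := fact_of_not_blocking h1 hacc hm1 ha1
      -- no pair of J at p outside M2
      have hsub1 : ∀ y, (y, p) ∈ jn I M1 M2 → (y, p) ∈ M2 := by
        intro y hyJ
        by_contra hy2
        have hym1 : (y, p) ∈ M1 := (jn_sub hyJ).resolve_right hy2
        have hG' := jn_fact2 h1 h2 hyJ hym1 hy2
        have hsy : lLt I (I.lec p) s y := by
          rcases hG' with ⟨-, hall⟩ | ⟨-, -, -, hall⟩
          · exact hall s (mem_projAsg.2 hm2)
          · exact hall s (mem_lecAsg.2 ⟨p, hm2, rfl⟩)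
        have hys : lLt I (I.lec p) y s := by
          rcases hF with ⟨-, hall⟩ | ⟨-, -, -, hall⟩
          · exact hall y (mem_projAsg.2 hym1)
          · exact hall y (mem_lecAsg.2 ⟨p, hym1, rfl⟩)
        exact lLt_asymm hsy hys
      -- strict deficit at p relative to M2
      have hdef : pcnt (jn I M1 M2) p < pcnt M2 p := by
        have hsub : (jn I M1 M2).filter (fun x => x.2 = p) ⊆ M2.filter (fun x => x.2 = p) := by
          intro x hx
          rcases Finset.mem_filter.1 hx with ⟨hxJ, hx2⟩
          obtain ⟨x1, x2⟩ := x
          cases hx2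
          exact Finset.mem_filter.2 ⟨hsub1 x1 hxJ, rfl⟩
        apply Finset.card_lt_card
        rw [Finset.ssubset_iff_of_subset hsub]
        exact ⟨(s, p), Finset.mem_filter.2 ⟨hm2, rfl⟩,
          fun hc => hnotJ (Finset.mem_filter.1 hc).1⟩
      rcases jn_K h1 h2 (I.lec p) with hK1 | hK2
      · -- project counts agree with M1 on this lecturer
        rcases hF with ⟨hfull1, -⟩ | ⟨-, -, hsnot1, hall1⟩
        · -- F1 impossible
          have e1 : pcnt M1 p = I.c p := by rw [pcnt_eq_projAsg]; exact hfull1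
          have e2 := hK1 p rfl
          have e3 : pcnt M2 p ≤ I.c p := h2.1.2.2.1 p
          omega
        · -- F2 : use the deficit witness
          rcases jn_deficit_witness2 h1 h2 rfl hdef with ⟨y, hy1, -, hyall⟩
          have h1' : lLt I (I.lec p) s y := hyall s (mem_lecAsg.2 ⟨p, hm2, rfl⟩)
          have h2' : lLt I (I.lec p) y s := hall1 y hy1
          exact lLt_asymm h1' h2'
      · have := hK2 p rfl
        omega
  -- main case: (s,p) ∉ M1 ∪ M2
  have ha1 : ∀ q, (s, q) ∈ M1 → ¬ sLt I s q p := by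
    intro q hq
    obtain ⟨qJ, hqJ⟩ := jn_matched1 (I := I) (M2 := M2) hq hfun1
    have haJ := ha qJ hqJ
    rcases jn_choice1 hqJ hq hfun1 with rfl | ⟨-, hlt⟩
    · exact haJ
    · intro hqp
      exact haJ (sLt_of_gt_of_ge (jn_acc h1 h2 (s, qJ) hqJ) (h1.1.1 (s, q) hq) hacc hlt hqp.1)
  have ha2 : ∀ q, (s, q) ∈ M2 → ¬ sLt I s q p := by
    intro q hq
    obtain ⟨qJ, hqJ⟩ := jn_matched2 (I := I) (M1 := M1) hq hfun1
    have haJ := ha qJ hqJ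
    rcases jn_choice2 hqJ hq hfun2 with rfl | ⟨-, hnlt⟩
    · exact haJ
    · intro hqp
      have hge : I.sPref s qJ q :=
        sPref_of_not_sLt (h2.1.1 (s, q) hq) (jn_acc h1 h2 (s, qJ) hqJ) hnlt
      exact haJ (sLt_of_ge_of_gt (jn_acc h1 h2 (s, qJ) hqJ) (h2.1.1 (s, q) hq) hacc hge hqp)
  have hF := fact_of_not_blocking h1 hacc hm1 ha1
  have hG := fact_of_not_blocking h2 hacc hm2 ha2
  have hsdom : ∃ q ∈ I.acc s, I.lec q = I.lec p := ⟨p, hacc, rfl⟩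
  rcases hcases with ⟨hp_lt, hk_lt⟩ | ⟨hp_lt, hk_eq, hW⟩ | ⟨hp_eq, t, ⟨htmem, -⟩, hst⟩
  · -- case (i)
    have hk_lt' : lcnt I (jn I M1 M2) (I.lec p) < I.d (I.lec p) := by
      rwa [lcnt_eq_lecAsg _ hfunJ]
    rcases hF with ⟨hfull1, -⟩ | ⟨-, hkfull1, -, -⟩
    · rcases hG with ⟨hfull2, -⟩ | ⟨-, hkfull2, -, -⟩
      · -- F1 ∧ G1 : use K
        have e1 : pcnt M1 p = I.c p := by rw [pcnt_eq_projAsg]; exact hfull1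
        have e2 : pcnt M2 p = I.c p := by rw [pcnt_eq_projAsg]; exact hfull2
        have e3 : pcnt (jn I M1 M2) p < I.c p := by
          rw [pcnt_eq_projAsg]; exact hp_lt
        rcases jn_K h1 h2 (I.lec p) with hK1 | hK2
        · have := hK1 p rfl; omega
        · have := hK2 p rfl; omega
      · -- G2 : lecturer full in M2, contradiction with hk_lt'
        have e1 : lcnt I M2 (I.lec p) = I.d (I.lec p) := by
          rw [lcnt_eq_lecAsg _ hfun2]; exact hkfull2
        have e2 := jn_lcnt_eq2 h1 h2 (I.lec p)
        omega
    · have e1 : lcnt I M1 (I.lec p) = I.d (I.lec p) := by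
        rw [lcnt_eq_lecAsg _ hfun1]; exact hkfull1
      have e2 := jn_lcnt_eq1 h1 h2 (I.lec p)
      omega
  · -- case (ii)
    have hp_lt' : pcnt (jn I M1 M2) p < I.c p := by
      rw [pcnt_eq_projAsg]; exact hp_lt
    rcases jn_K h1 h2 (I.lec p) with hK1 | hK2
    · -- counts agree with M1 : F must be F2
      rcases hF with ⟨hfull1, -⟩ | ⟨-, -, hsnot1, hall1⟩
      · have e1 : pcnt M1 p = I.c p := by rw [pcnt_eq_projAsg]; exact hfull1
        have e2 := hK1 p rfl
        omega
      · rcases hW with hsJ | ⟨t, ⟨htmem, -⟩, hst⟩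
        · -- s assigned to lec p in J
          obtain ⟨q, hqJ, hqk⟩ := mem_lecAsg.1 hsJ
          rcases jn_sub hqJ with hq1 | hq2
          · exact hsnot1 (mem_lecAsg.2 ⟨q, hq1, hqk⟩)
          · have hs2 : s ∈ lecAsg I M2 (I.lec p) := mem_lecAsg.2 ⟨q, hq2, hqk⟩
            rcases hG with ⟨hfull2, -⟩ | ⟨-, -, hsnot2, -⟩
            · -- G1 : deficit at p vs M2, get witness
              have hdef : pcnt (jn I M1 M2) p < pcnt M2 p := by
                have : pcnt M2 p = I.c p := by rw [pcnt_eq_projAsg]; exact hfull2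
                omega
              rcases jn_deficit_witness2 h1 h2 rfl hdef with ⟨y, hy1, -, hyall⟩
              exact lLt_asymm (hyall s hs2) (hall1 y hy1)
            · exact hsnot2 hs2
        · -- a witness t in J's lecturer assignment with s ⪰ t
          obtain ⟨q, hqJ, hqk⟩ := mem_lecAsg.1 htmem
          rcases jn_sub hqJ with hq1 | hq2
          · exact (hall1 t (mem_lecAsg.2 ⟨q, hq1, hqk⟩)).2 hst
          · have ht2 : t ∈ lecAsg I M2 (I.lec p) := mem_lecAsg.2 ⟨q, hq2, hqk⟩
            rcases hG with ⟨hfull2, -⟩ | ⟨-, -, -, hall2⟩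
            · have hdef : pcnt (jn I M1 M2) p < pcnt M2 p := by
                have : pcnt M2 p = I.c p := by rw [pcnt_eq_projAsg]; exact hfull2
                omega
              rcases jn_deficit_witness2 h1 h2 rfl hdef with ⟨y, hy1, -, hyall⟩
              have hyt : lLt I (I.lec p) t y := hyall t ht2
              have hys : lLt I (I.lec p) y s := hall1 y hy1
              have hytd := dom_of_lecAsg h2.1 t ht2
              have hyd := dom_of_lecAsg h1.1 y hy1
              exact lLt_asymm hyt (lLt_of_gt_of_ge hyd hsdom hytd hys hst)
            · exact (hall2 t ht2).2 hst
    · -- counts agree with M2 : G must be G2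
      rcases hG with ⟨hfull2, -⟩ | ⟨-, -, hsnot2, hall2⟩
      · have e1 : pcnt M2 p = I.c p := by rw [pcnt_eq_projAsg]; exact hfull2
        have e2 := hK2 p rfl
        omega
      · rcases hW with hsJ | ⟨t, ⟨htmem, -⟩, hst⟩
        · obtain ⟨q, hqJ, hqk⟩ := mem_lecAsg.1 hsJ
          rcases jn_sub hqJ with hq1 | hq2
          · have hs1 : s ∈ lecAsg I M1 (I.lec p) := mem_lecAsg.2 ⟨q, hq1, hqk⟩
            rcases hF with ⟨hfull1, -⟩ | ⟨-, -, hsnot1, -⟩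
            · have hdef : pcnt (jn I M1 M2) p < pcnt M1 p := by
                have : pcnt M1 p = I.c p := by rw [pcnt_eq_projAsg]; exact hfull1
                omega
              rcases jn_deficit_witness1 h1 h2 rfl hdef with ⟨x, hx1, -, hxall⟩
              exact lLt_asymm (hxall s hs1) (hall2 x hx1)
            · exact hsnot1 hs1
          · exact hsnot2 (mem_lecAsg.2 ⟨q, hq2, hqk⟩)
        · obtain ⟨q, hqJ, hqk⟩ := mem_lecAsg.1 htmem
          rcases jn_sub hqJ with hq1 | hq2
          · have ht1 : t ∈ lecAsg I M1 (I.lec p) := mem_lecAsg.2 ⟨q, hq1, hqk⟩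
            rcases hF with ⟨hfull1, -⟩ | ⟨-, -, -, hall1⟩
            · have hdef : pcnt (jn I M1 M2) p < pcnt M1 p := by
                have : pcnt M1 p = I.c p := by rw [pcnt_eq_projAsg]; exact hfull1
                omega
              rcases jn_deficit_witness1 h1 h2 rfl hdef with ⟨x, hx1, -, hxall⟩
              have hxt : lLt I (I.lec p) t x := hxall t ht1
              have hxs : lLt I (I.lec p) x s := hall2 x hx1
              have htd := dom_of_lecAsg h1.1 t ht1
              have hxd := dom_of_lecAsg h2.1 x hx1
              exact lLt_asymm hxt (lLt_of_gt_of_ge hxd hsdom htd hxs hst)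
            · exact (hall1 t ht1).2 hst
          · exact (hall2 t (mem_lecAsg.2 ⟨q, hq2, hqk⟩)).2 hst
  · -- case (iii)
    have htJ : (t, p) ∈ jn I M1 M2 := mem_projAsg.1 htmem
    rcases jn_sub htJ with ht1 | ht2
    · exact (fact_all_proj hF t (mem_projAsg.2 ht1)).2 hst
    · exact (fact_all_proj hG t (mem_projAsg.2 ht2)).2 hst

end Aux5

end SPAST
namespace SPAST

section Aux6
set_option linter.unusedSectionVars false

variable {S P L : Type} [Fintype S] [Fintype P] [Fintype L]
  [DecidableEq S] [DecidableEq P] [DecidableEq L]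

variable {I : SPAST S P L}

/-- the join dominates `M1` -/
lemma jn_dom1 {M1 M2 : Finset (S × P)} (h1 : SuperStable I M1) (h2 : SuperStable I M2) :
    ∀ s q, (s, q) ∈ M1 → ∃ q', (s, q') ∈ jn I M1 M2 ∧ ¬ sLt I s q q' := by
  intro s q hq
  obtain ⟨qJ, hqJ⟩ := jn_matched1 (I := I) (M2 := M2) hq h1.1.2.1
  rcases jn_choice1 hqJ hq h1.1.2.1 with rfl | ⟨-, hlt⟩
  · exact ⟨qJ, hqJ, fun hl => sLt_irrefl hl⟩
  · exact ⟨qJ, hqJ, fun hl => sLt_asymm hl hlt⟩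

/-- the join dominates `M2` -/
lemma jn_dom2 {M1 M2 : Finset (S × P)} (h1 : SuperStable I M1) (h2 : SuperStable I M2) :
    ∀ s q, (s, q) ∈ M2 → ∃ q', (s, q') ∈ jn I M1 M2 ∧ ¬ sLt I s q q' := by
  intro s q hq
  obtain ⟨qJ, hqJ⟩ := jn_matched2 (I := I) (M1 := M1) hq h1.1.2.1
  rcases jn_choice2 hqJ hq h2.1.2.1 with rfl | ⟨-, hnlt⟩
  · exact ⟨qJ, hqJ, fun hl => sLt_irrefl hl⟩
  · exact ⟨qJ, hqJ, hnlt⟩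

/-- transitivity of (weak) domination -/
lemma dom_trans {A B C : Finset (S × P)}
    (hA : I.IsMatching A) (hB : I.IsMatching B) (hC : I.IsMatching C)
    (hAB : ∀ s q, (s, q) ∈ A → ∃ q', (s, q') ∈ B ∧ ¬ sLt I s q q')
    (hBC : ∀ s q, (s, q) ∈ B → ∃ q', (s, q') ∈ C ∧ ¬ sLt I s q q') :
    ∀ s q, (s, q) ∈ A → ∃ q', (s, q') ∈ C ∧ ¬ sLt I s q q' := by
  intro s q hq
  obtain ⟨q', hq', h1⟩ := hAB s q hq
  obtain ⟨q'', hq'', h2⟩ := hBC s q' hq'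
  refine ⟨q'', hq'', fun hlt => ?_⟩
  have hq_acc : q ∈ I.acc s := hA.1 (s, q) hq
  have hq'_acc : q' ∈ I.acc s := hB.1 (s, q') hq'
  have hq''_acc : q'' ∈ I.acc s := hC.1 (s, q'') hq''
  have e1 : I.sPref s q' q := sPref_of_not_sLt hq_acc hq'_acc h1
  have e2 : I.sPref s q'' q' := sPref_of_not_sLt hq'_acc hq''_acc h2
  exact hlt.2 (I.sTrans s q'' hq''_acc q' hq'_acc q hq_acc e2 e1)

/-- folding the join over a list of matchings produces a common dominator -/
lemma fold_opt : ∀ (l : List (Finset (S × P))) (A : Finset (S × P)), SuperStable I A →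
    ∃ B, SuperStable I B ∧
      (∀ s q, (s, q) ∈ A → ∃ q', (s, q') ∈ B ∧ ¬ sLt I s q q') ∧
      ∀ C ∈ l, SuperStable I C →
        ∀ s q, (s, q) ∈ C → ∃ q', (s, q') ∈ B ∧ ¬ sLt I s q q' := by
  intro l
  induction l with
  | nil =>
    intro A hA
    exact ⟨A, hA, fun s q h => ⟨q, h, fun hl => sLt_irrefl hl⟩, by simp⟩
  | cons hd tl ih =>
    intro A hA
    by_cases hh : SuperStable I hd
    · have hA' : SuperStable I (jn I A hd) := jn_superstable hA hh
      obtain ⟨B, hB, hBA', hBtl⟩ := ih (jn I A hd) hA'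
      refine ⟨B, hB, ?_, ?_⟩
      · exact dom_trans hA.1 hA'.1 hB.1 (jn_dom1 hA hh) hBA'
      · intro C hC hCss
        rcases List.mem_cons.1 hC with rfl | hC'
        · exact dom_trans hCss.1 hA'.1 hB.1 (jn_dom2 hA hCss) hBA'
        · exact hBtl C hC' hCss
    · obtain ⟨B, hB, hBA, hBtl⟩ := ih A hA
      refine ⟨B, hB, hBA, ?_⟩
      intro C hC hCss
      rcases List.mem_cons.1 hC with rfl | hC'
      · exact absurd hCss hh
      · exact hBtl C hC' hCss

end Aux6

end SPAST

open SPAST in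
theorem exists_student_optimal_super_stable {S P L : Type} [Fintype S] [Fintype P] [Fintype L]
    [DecidableEq S] [DecidableEq P] [DecidableEq L]
    (I : SPAST S P L) (hss : ∃ M : Finset (S × P), SuperStable I M) :
    ∃ Mopt : Finset (S × P), SuperStable I Mopt ∧
      (∀ M : Finset (S × P), SuperStable I M → ∀ (s : S) (p : P), (s, p) ∈ M →
        ∃ p' : P, (s, p') ∈ Mopt ∧ ¬(I.sPref s p p' ∧ ¬I.sPref s p' p)) ∧
      (∀ s : S, (∀ p : P, (s, p) ∉ Mopt) →
        ∀ M : Finset (S × P), SuperStable I M → ∀ p : P, (s, p) ∉ M) := by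
  classical
  obtain ⟨M0, hM0⟩ := hss
  obtain ⟨B, hB, -, hdom⟩ :=
    fold_opt ((Finset.univ : Finset (Finset (S × P))).toList) M0 hM0
  refine ⟨B, hB, ?_, ?_⟩
  · intro M hM s p hsp
    exact hdom M (Finset.mem_toList.2 (Finset.mem_univ M)) hM s p hsp
  · intro s hs M hM p hp
    rcases hdom M (Finset.mem_toList.2 (Finset.mem_univ M)) hM s p hp with ⟨p', hp', -⟩
    exact hs p' hp'
end

section
/- Let I be an instance of SPA-ST and let J be the integer programming model of I. Every feasible solution of J (an assignment of values in {0,1} to all the variables satisfying all twelve constraint families) yields a super-stable matching M = {(s_i, p_j) : x_{i,j} = 1} in I, and the objective value Σ_{acceptable (s_i,p_j)} x_{i,j} equals |M|. -/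
open scoped Classical

namespace SPAST

variable {S P L : Type} [Fintype S] [Fintype P] [Fintype L]
  [DecidableEq S] [DecidableEq P] [DecidableEq L]

/-- The variables of the integer programming model `J` of an SPA-ST instance. -/
structure IPSol (S P L : Type) where
  x : S → P → ℤ
  alpha : P → ℤ
  beta : L → ℤ
  eta : L → ℤ
  delta : S → L → ℤ
  gamma : P → ℤ
  lam : S → P → ℤ

/-- a value in {0,1} -/
def Bin (v : ℤ) : Prop := v = 0 ∨ v = 1

/-- θ_{i,j} = 1 − x_{i,j} − Σ_{p' ∈ S_{i,j}} x_{i,p'}, where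
`S_{i,j}` is the set of projects `s` strictly prefers to `p`. -/
noncomputable def theta (I : SPAST S P L) (sol : IPSol S P L) (s : S) (p : P) : ℤ :=
  1 - sol.x s p -
    ∑ p' ∈ (I.acc s).filter (fun p' => I.sPref s p' p ∧ ¬I.sPref s p p'), sol.x s p'

/-- `sol` is a feasible solution of the IP model `J` of `I`: all variables take
values in {0,1} and the twelve constraint families hold. -/
def Feasible (I : SPAST S P L) (sol : IPSol S P L) : Prop :=
  -- binary variables
  (∀ (s : S) (p : P), Bin (sol.x s p)) ∧
  (∀ p : P, Bin (sol.alpha p)) ∧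
  (∀ k : L, Bin (sol.beta k)) ∧
  (∀ k : L, Bin (sol.eta k)) ∧
  (∀ (s : S) (k : L), Bin (sol.delta s k)) ∧
  (∀ p : P, Bin (sol.gamma p)) ∧
  (∀ (s : S), ∀ p ∈ I.acc s, Bin (sol.lam s p)) ∧
  -- x variables exist only for acceptable pairs
  (∀ (s : S) (p : P), p ∉ I.acc s → sol.x s p = 0) ∧
  -- (1)
  (∀ s : S, ∑ p ∈ I.acc s, sol.x s p ≤ 1) ∧
  -- (2)
  (∀ p : P, ∑ s : S, sol.x s p ≤ (I.c p : ℤ)) ∧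
  -- (3)
  (∀ k : L, ∑ s : S, ∑ p ∈ Finset.univ.filter (fun p => I.lec p = k), sol.x s p
    ≤ (I.d k : ℤ)) ∧
  -- (4)
  (∀ p : P, (I.c p : ℤ) * sol.alpha p ≥ (I.c p : ℤ) - ∑ s : S, sol.x s p) ∧
  -- (5)
  (∀ k : L, (I.d k : ℤ) * sol.beta k ≥
    (I.d k : ℤ) - ∑ s : S, ∑ p ∈ Finset.univ.filter (fun p => I.lec p = k), sol.x s p) ∧
  -- (6)
  (∀ (s : S), ∀ p ∈ I.acc s,
    theta I sol s p + sol.alpha p + sol.beta (I.lec p) ≤ 2) ∧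
  -- (7)
  (∀ k : L, (I.d k : ℤ) * sol.eta k ≥
    1 + (∑ s : S, ∑ p ∈ Finset.univ.filter (fun p => I.lec p = k), sol.x s p)
      - (I.d k : ℤ)) ∧
  -- (8)
  (∀ (s : S) (k : L), (I.d k : ℤ) * sol.delta s k ≥
    (∑ s' : S, ∑ p ∈ Finset.univ.filter (fun p => I.lec p = k), sol.x s' p) -
    ∑ s' ∈ Finset.univ.filter (fun s' : S =>
        (∃ q ∈ I.acc s', I.lec q = k) ∧ I.lPref k s' s ∧ ¬I.lPref k s s'),
      ∑ p ∈ Finset.univ.filter (fun p => I.lec p = k), sol.x s' p) ∧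
  -- (9)
  (∀ (s : S), ∀ p ∈ I.acc s,
    theta I sol s p + sol.alpha p + sol.eta (I.lec p) + sol.delta s (I.lec p) ≤ 3) ∧
  -- (10)
  (∀ p : P, (I.c p : ℤ) * sol.gamma p ≥ 1 + (∑ s : S, sol.x s p) - (I.c p : ℤ)) ∧
  -- (11)
  (∀ (s : S), ∀ p ∈ I.acc s, (I.c p : ℤ) * sol.lam s p ≥
    (∑ s' : S, sol.x s' p) -
    ∑ s' ∈ Finset.univ.filter (fun s' : S =>
        p ∈ I.acc s' ∧ I.lPref (I.lec p) s' s ∧ ¬I.lPref (I.lec p) s s'),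
      sol.x s' p) ∧
  -- (12)
  (∀ (s : S), ∀ p ∈ I.acc s,
    theta I sol s p + sol.gamma p + sol.lam s p ≤ 2)

/-- The matching `{(s_i, p_j) : x_{i,j} = 1}` derived from an IP solution. -/
def matchOf (sol : IPSol S P L) : Finset (S × P) :=
  Finset.univ.filter (fun y : S × P => sol.x y.1 y.2 = 1)

end SPAST

namespace SPAST

variable {S P L : Type} [Fintype S] [Fintype P] [Fintype L]
  [DecidableEq S] [DecidableEq P] [DecidableEq L]

lemma sum_bin_card {α : Type} [DecidableEq α] (t : Finset α) (f : α → ℤ)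
    (hb : ∀ i ∈ t, f i = 0 ∨ f i = 1) :
    ∑ i ∈ t, f i = ((t.filter (fun i => f i = 1)).card : ℤ) := by
  have h : ∑ i ∈ t, f i = ∑ i ∈ t, (if f i = 1 then (1:ℤ) else 0) := by
    apply Finset.sum_congr rfl
    intro i hi
    rcases hb i hi with h|h <;> simp [h]
  rw [h, Finset.sum_boole]

lemma bin_one {v c : ℤ} (hb : Bin v) (h : 1 ≤ c * v) : v = 1 := by
  rcases hb with h0 | h1
  · rw [h0, mul_zero] at h; omega
  · exact h1

end SPAST

open SPAST in
theorem feasible_solution_gives_super_stable {S P L : Type} [Fintype S] [Fintype P] [Fintype L]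
    [DecidableEq S] [DecidableEq P] [DecidableEq L]
    (I : SPAST S P L) (sol : IPSol S P L) (h : Feasible I sol) :
    SuperStable I (matchOf sol) ∧
      (∑ s : S, ∑ p ∈ I.acc s, sol.x s p) = ((matchOf sol).card : ℤ) := by
  obtain ⟨hbx, hba, hbb, hbe, hbd, hbg, hbl, hx0, h1, h2, h3, h4, h5, h6, h7, h8, h9, h10, h11, h12⟩ := h
  -- basic set identities
  have hproj : ∀ p : P, projAsg (matchOf sol) p
      = Finset.univ.filter (fun s => sol.x s p = 1) := by
    intro p
    ext s
    simp only [projAsg, matchOf, Finset.mem_image, Finset.mem_filter, Finset.mem_univ, true_and]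
    constructor
    · rintro ⟨⟨s', p'⟩, ⟨hx, hp⟩, rfl⟩
      subst hp
      exact hx
    · intro hx
      exact ⟨(s, p), ⟨hx, rfl⟩, rfl⟩
  have hsum2 : ∀ p : P, ∑ s : S, sol.x s p = ((projAsg (matchOf sol) p).card : ℤ) := by
    intro p
    rw [hproj p]
    exact sum_bin_card _ _ (fun s _ => hbx s p)
  have hprojfil : ∀ p : P, (projAsg (matchOf sol) p).card
      = ((matchOf sol).filter (fun y => y.2 = p)).card := by
    intro p
    apply Finset.card_image_of_injOn
    intro a ha b hb hab
    have ha2 : a.2 = p := (Finset.mem_filter.mp ha).2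
    have hb2 : b.2 = p := (Finset.mem_filter.mp hb).2
    exact Prod.ext hab (ha2.trans hb2.symm)
  have huniq : ∀ s : S, ∀ p q : P, (s,p) ∈ matchOf sol → (s,q) ∈ matchOf sol → p = q := by
    intro s p q hp hq
    by_contra hne
    have hxp : sol.x s p = 1 := (Finset.mem_filter.mp hp).2
    have hxq : sol.x s q = 1 := (Finset.mem_filter.mp hq).2
    have hpacc : p ∈ I.acc s := by
      by_contra h'
      rw [hx0 s p h'] at hxp
      omega
    have hqacc : q ∈ I.acc s := by
      by_contra h'
      rw [hx0 s q h'] at hxq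
      omega
    have hsub : ({p, q} : Finset P) ⊆ I.acc s := by
      intro r hr
      rcases Finset.mem_insert.mp hr with h'|h'
      · exact h' ▸ hpacc
      · exact (Finset.mem_singleton.mp h') ▸ hqacc
    have h2le : (2:ℤ) ≤ ∑ p' ∈ I.acc s, sol.x s p' := by
      calc (2:ℤ) = ∑ p' ∈ ({p,q}:Finset P), sol.x s p' := by
            rw [Finset.sum_pair hne, hxp, hxq]
            norm_num
        _ ≤ _ := Finset.sum_le_sum_of_subset_of_nonneg hsub
            (fun i _ _ => by rcases hbx s i with h'|h' <;> omega)
    have := h1 s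
    omega
  have hlecfil : ∀ k : L, (lecAsg I (matchOf sol) k).card
      = ((matchOf sol).filter (fun y => I.lec y.2 = k)).card := by
    intro k
    apply Finset.card_image_of_injOn
    intro a ha b hb hab
    have ha1 : a ∈ matchOf sol := Finset.mem_of_mem_filter a ha
    have hb1 : b ∈ matchOf sol := Finset.mem_of_mem_filter b hb
    have ha1' : (a.1, a.2) ∈ matchOf sol := by simpa using ha1
    have hb1' : (a.1, b.2) ∈ matchOf sol := by rw [hab]; simpa using hb1
    exact Prod.ext hab (huniq a.1 a.2 b.2 ha1' hb1')
  have hsum3 : ∀ k : L,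
      (∑ s : S, ∑ p ∈ Finset.univ.filter (fun p => I.lec p = k), sol.x s p)
      = (((matchOf sol).filter (fun y => I.lec y.2 = k)).card : ℤ) := by
    intro k
    rw [← Finset.sum_product']
    rw [sum_bin_card (Finset.univ ×ˢ Finset.univ.filter (fun p => I.lec p = k))
      (fun y : S × P => sol.x y.1 y.2) (fun y _ => hbx y.1 y.2)]
    have hset : (Finset.univ ×ˢ Finset.univ.filter (fun p => I.lec p = k)).filter
        (fun y : S × P => sol.x y.1 y.2 = 1)
        = (matchOf sol).filter (fun y => I.lec y.2 = k) := by
      ext y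
      simp only [matchOf, Finset.mem_filter, Finset.mem_product, Finset.mem_univ, true_and]
      tauto
    rw [hset]
  -- no super-blocking pair
  have hnoblock : ∀ (s : S) (p : P), ¬SuperBlocking I (matchOf sol) s p := by
    rintro s p ⟨hacc, hnm, hq, hcase⟩
    set k := I.lec p with hk
    have hxsp : sol.x s p = 0 := by
      rcases hbx s p with h'|h'
      · exact h'
      · exact absurd (show (s, p) ∈ matchOf sol from
          Finset.mem_filter.mpr ⟨Finset.mem_univ _, h'⟩) hnm
    have htheta : theta I sol s p = 1 := by
      unfold theta
      rw [hxsp]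
      have hz : ∑ p' ∈ (I.acc s).filter (fun p' => I.sPref s p' p ∧ ¬I.sPref s p p'),
          sol.x s p' = 0 := by
        apply Finset.sum_eq_zero
        intro p' hp'
        rcases hbx s p' with h'|h'
        · exact h'
        · exact absurd (Finset.mem_filter.mp hp').2
            (hq p' (Finset.mem_filter.mpr ⟨Finset.mem_univ _, h'⟩))
      rw [hz]
      ring
    have halpha : (projAsg (matchOf sol) p).card < I.c p → sol.alpha p = 1 := by
      intro hlt
      have h4' := h4 p
      rw [hsum2 p] at h4'
      have hc : ((projAsg (matchOf sol) p).card : ℤ) < (I.c p : ℤ) := by exact_mod_cast hlt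
      exact bin_one (hba p) (by linarith : (1:ℤ) ≤ (I.c p : ℤ) * sol.alpha p)
    rcases hcase with ⟨hplt, hklt⟩ | ⟨hplt, hkfull, hw⟩ | ⟨hpfull, t, ⟨htmem, _⟩, hst⟩
    · -- case (i)
      have ha1 : sol.alpha p = 1 := halpha hplt
      have hb1 : sol.beta k = 1 := by
        have h5' := h5 k
        rw [hsum3 k] at h5'
        have hc : ((lecAsg I (matchOf sol) k).card : ℤ) < (I.d k : ℤ) := by exact_mod_cast hklt
        rw [hlecfil k] at hc
        exact bin_one (hbb k) (by linarith : (1:ℤ) ≤ (I.d k : ℤ) * sol.beta k)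
      have := h6 s p hacc
      rw [htheta, ha1, ← hk, hb1] at this
      omega
    · -- case (ii)
      have ha1 : sol.alpha p = 1 := halpha hplt
      have he1 : sol.eta k = 1 := by
        have h7' := h7 k
        rw [hsum3 k] at h7'
        have hc : ((lecAsg I (matchOf sol) k).card : ℤ) = (I.d k : ℤ) := by exact_mod_cast hkfull
        rw [hlecfil k] at hc
        exact bin_one (hbe k) (by linarith : (1:ℤ) ≤ (I.d k : ℤ) * sol.eta k)
      obtain ⟨t, ht_mem, ht_not⟩ :
          ∃ t, t ∈ lecAsg I (matchOf sol) k ∧ ¬(I.lPref k t s ∧ ¬I.lPref k s t) := by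
        rcases hw with hs | ⟨t, ⟨htmem, _⟩, hst⟩
        · exact ⟨s, hs, fun h' => h'.2 h'.1⟩
        · exact ⟨t, htmem, fun h' => h'.2 hst⟩
      have hd1 : sol.delta s k = 1 := by
        apply bin_one (hbd s k) (c := (I.d k : ℤ))
        have h8' := h8 s k
        obtain ⟨y, hy, hyt⟩ := Finset.mem_image.mp ht_mem
        have hy' := Finset.mem_filter.mp hy
        have hxy : sol.x y.1 y.2 = 1 := (Finset.mem_filter.mp hy'.1).2
        have hft : (1:ℤ) ≤ ∑ p' ∈ Finset.univ.filter (fun p => I.lec p = k), sol.x t p' := by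
          rw [← hyt]
          calc (1:ℤ) = sol.x y.1 y.2 := hxy.symm
            _ ≤ _ := Finset.single_le_sum (f := fun p' => sol.x y.1 p')
                (fun i _ => by
                  show (0:ℤ) ≤ sol.x y.1 i
                  rcases hbx y.1 i with h'|h' <;> omega)
                (Finset.mem_filter.mpr ⟨Finset.mem_univ _, hy'.2⟩)
        have htD : t ∉ Finset.univ.filter (fun s' : S =>
            (∃ q ∈ I.acc s', I.lec q = k) ∧ I.lPref k s' s ∧ ¬I.lPref k s s') := by
          intro hmem
          exact ht_not (Finset.mem_filter.mp hmem).2.2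
        have hsub : Finset.univ.filter (fun s' : S =>
            (∃ q ∈ I.acc s', I.lec q = k) ∧ I.lPref k s' s ∧ ¬I.lPref k s s')
            ⊆ Finset.univ.erase t := by
          intro a ha
          exact Finset.mem_erase.mpr ⟨fun h' => htD (h' ▸ ha), Finset.mem_univ _⟩
        have hDle : ∑ s' ∈ Finset.univ.filter (fun s' : S =>
              (∃ q ∈ I.acc s', I.lec q = k) ∧ I.lPref k s' s ∧ ¬I.lPref k s s'),
              ∑ p' ∈ Finset.univ.filter (fun p => I.lec p = k), sol.x s' p'
            ≤ ∑ s' ∈ Finset.univ.erase t,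
              ∑ p' ∈ Finset.univ.filter (fun p => I.lec p = k), sol.x s' p' :=
          Finset.sum_le_sum_of_subset_of_nonneg hsub
            (fun i _ _ => Finset.sum_nonneg (fun j _ => by rcases hbx i j with h'|h' <;> omega))
        have herase : ∑ s' ∈ Finset.univ.erase t,
              ∑ p' ∈ Finset.univ.filter (fun p => I.lec p = k), sol.x s' p'
            = (∑ s' : S, ∑ p' ∈ Finset.univ.filter (fun p => I.lec p = k), sol.x s' p')
              - ∑ p' ∈ Finset.univ.filter (fun p => I.lec p = k), sol.x t p' :=
          Finset.sum_erase_eq_sub (Finset.mem_univ t)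
        linarith
      have := h9 s p hacc
      rw [htheta, ha1, ← hk, he1, hd1] at this
      omega
    · -- case (iii)
      have hg1 : sol.gamma p = 1 := by
        apply bin_one (hbg p) (c := (I.c p : ℤ))
        have h10' := h10 p
        have heq : (∑ s' : S, sol.x s' p) = (I.c p : ℤ) := by
          rw [hsum2 p, hpfull]
        linarith
      have hl1 : sol.lam s p = 1 := by
        apply bin_one (hbl s p hacc) (c := (I.c p : ℤ))
        have h11' := h11 s p hacc
        have hxt : sol.x t p = 1 := by
          have ht' : t ∈ Finset.univ.filter (fun s' => sol.x s' p = 1) := (hproj p) ▸ htmem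
          exact (Finset.mem_filter.mp ht').2
        have htT : t ∉ Finset.univ.filter (fun s' : S =>
            p ∈ I.acc s' ∧ I.lPref k s' s ∧ ¬I.lPref k s s') := by
          intro hmem
          exact (Finset.mem_filter.mp hmem).2.2.2 hst
        have hsub : Finset.univ.filter (fun s' : S =>
            p ∈ I.acc s' ∧ I.lPref k s' s ∧ ¬I.lPref k s s') ⊆ Finset.univ.erase t := by
          intro a ha
          exact Finset.mem_erase.mpr ⟨fun h' => htT (h' ▸ ha), Finset.mem_univ _⟩
        have hTle : ∑ s' ∈ Finset.univ.filter (fun s' : S =>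
              p ∈ I.acc s' ∧ I.lPref k s' s ∧ ¬I.lPref k s s'), sol.x s' p
            ≤ ∑ s' ∈ Finset.univ.erase t, sol.x s' p :=
          Finset.sum_le_sum_of_subset_of_nonneg hsub
            (fun i _ _ => by rcases hbx i p with h'|h' <;> omega)
        have herase : ∑ s' ∈ Finset.univ.erase t, sol.x s' p
            = (∑ s' : S, sol.x s' p) - sol.x t p :=
          Finset.sum_erase_eq_sub (Finset.mem_univ t)
        linarith
      have := h12 s p hacc
      rw [htheta, hg1, hl1] at this
      omega
  refine ⟨⟨⟨?_, huniq, ?_, ?_⟩, hnoblock⟩, ?_⟩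
  · -- acceptability
    intro y hy
    by_contra h'
    have hx1 : sol.x y.1 y.2 = 1 := (Finset.mem_filter.mp hy).2
    rw [hx0 y.1 y.2 h'] at hx1
    omega
  · -- project capacities
    intro p
    have h2' := h2 p
    rw [hsum2 p] at h2'
    have : (projAsg (matchOf sol) p).card ≤ I.c p := by exact_mod_cast h2'
    rwa [hprojfil p] at this
  · -- lecturer capacities
    intro k
    have h3' := h3 k
    rw [hsum3 k] at h3'
    exact_mod_cast h3'
  · -- objective value
    have hext : ∑ s : S, ∑ p ∈ I.acc s, sol.x s p = ∑ s : S, ∑ p : P, sol.x s p := by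
      apply Finset.sum_congr rfl
      intro s _
      exact Finset.sum_subset (Finset.subset_univ _) (fun p _ hp => hx0 s p hp)
    rw [hext, ← Finset.sum_product']
    rw [sum_bin_card (Finset.univ ×ˢ Finset.univ) (fun y : S × P => sol.x y.1 y.2)
      (fun y _ => hbx y.1 y.2)]
    congr 1
end
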